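/- arXiv:2010.14434 — 4 statements merged into one kernel-verified Lean document; each statement's English description precedes it below -/
import Mathlib

section
/- Let N ≥ 1 be an integer, let p > 1, and let Q : ℝ^N → ℝ be a Schwartz function solving the elliptic equation ΔQ − Q + |Q|^{p−1}Q = 0 pointwise on ℝ^N. Then ∫_{ℝ^N} |Q|^{p+1} dx = (2(p+1))/(N(p−1)) · ∫_{ℝ^N} |∇Q|² dx. -/
open MeasureTheory Real SchwartzMap
open scoped RealInnerProductSpace

/-- The Laplacian of `f : ℝ^N → ℝ`, as the sum of the second partial derivatives. -/
noncomputable def lap {N : ℕ} (f : EuclideanSpace ℝ (Fin N) → ℝ)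
    (x : EuclideanSpace ℝ (Fin N)) : ℝ :=
  ∑ i : Fin N,
    fderiv ℝ (fun y => fderiv ℝ f y (EuclideanSpace.single i 1)) x (EuclideanSpace.single i 1)

namespace PohAux

variable {N : ℕ}

local notation "𝔼" => EuclideanSpace ℝ (Fin N)
lemma hld_mul {f g : 𝔼 → ℝ} {a b : ℝ} {x v : 𝔼}
    (hf : HasLineDerivAt ℝ f a x v) (hg : HasLineDerivAt ℝ g b x v) :
    HasLineDerivAt ℝ (fun y => f y * g y) (a * g x + f x * b) x v := by
  unfold HasLineDerivAt at *
  have := hf.mul hg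
  simp only [zero_smul, add_zero] at this
  exact this

lemma hld_sum {ι : Type*} (s : Finset ι) {f : ι → 𝔼 → ℝ} {a : ι → ℝ} {x v : 𝔼}
    (h : ∀ i ∈ s, HasLineDerivAt ℝ (f i) (a i) x v) :
    HasLineDerivAt ℝ (fun y => ∑ i ∈ s, f i y) (∑ i ∈ s, a i) x v := by
  unfold HasLineDerivAt at *
  exact HasDerivAt.fun_sum h

lemma hld_comp {h : ℝ → ℝ} {h' a : ℝ} {f : 𝔼 → ℝ} {x v : 𝔼}
    (hh : HasDerivAt h h' (f x)) (hf : HasLineDerivAt ℝ f a x v) :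
    HasLineDerivAt ℝ (fun y => h (f y)) (h' * a) x v := by
  unfold HasLineDerivAt at *
  exact HasDerivAt.comp 0 (by simpa using hh) hf

lemma hasDerivAt_abs_rpow {c : ℝ} (hc : 2 ≤ c) (t : ℝ) :
    HasDerivAt (fun s : ℝ => |s| ^ c) (c * |t| ^ (c - 2) * t) t := by
  have h1 : HasDerivAt (fun u : ℝ => u ^ (c / 2)) ((c / 2) * (t ^ 2) ^ (c / 2 - 1)) (t ^ 2) :=
    Real.hasDerivAt_rpow_const (Or.inr (by linarith))
  have h2 : HasDerivAt (fun s : ℝ => s ^ 2) (2 * t) t := by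
    simpa using hasDerivAt_pow 2 t
  have h3 : HasDerivAt ((fun u : ℝ => u ^ (c / 2)) ∘ (fun s : ℝ => s ^ 2))
      ((c / 2) * (t ^ 2) ^ (c / 2 - 1) * (2 * t)) t := HasDerivAt.comp t h1 h2
  have key : ∀ s : ℝ, (s ^ 2 : ℝ) ^ (c / 2) = |s| ^ c := by
    intro s
    rw [← sq_abs, ← Real.rpow_natCast |s| 2, ← Real.rpow_mul (abs_nonneg s)]
    congr 1
    ring
  have key2 : (t ^ 2 : ℝ) ^ (c / 2 - 1) = |t| ^ (c - 2) := by
    rw [← sq_abs, ← Real.rpow_natCast |t| 2, ← Real.rpow_mul (abs_nonneg t)]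
    ring_nf
  have h4 : HasDerivAt (fun s : ℝ => |s| ^ c) ((c / 2) * (t ^ 2) ^ (c / 2 - 1) * (2 * t)) t := by
    have heq : ((fun u : ℝ => u ^ (c / 2)) ∘ (fun s : ℝ => s ^ 2)) = fun s : ℝ => |s| ^ c :=
      funext key
    rw [← heq]
    exact h3
  rw [key2] at h4
  convert h4 using 1
  ring

lemma schwartz_bound (f : SchwartzMap 𝔼 ℝ) : ∃ C : ℝ, ∀ x, ‖f x‖ ≤ C := by
  obtain ⟨C, hC⟩ := f.decay 0 0
  exact ⟨C, fun x => by simpa using hC.2 x⟩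

lemma abs_coord_le_norm (x : 𝔼) (j : Fin N) : |x j| ≤ ‖x‖ := by
  have h := abs_real_inner_le_norm (EuclideanSpace.single j (1 : ℝ)) x
  simpa [EuclideanSpace.inner_single_left] using h

lemma int_SS (f g : SchwartzMap 𝔼 ℝ) : Integrable (fun x => f x * g x) := by
  obtain ⟨C, hC⟩ := schwartz_bound f
  exact g.integrable.bdd_mul f.continuous.aestronglyMeasurable (c := C) (ae_of_all _ hC)

lemma int_xSS (j : Fin N) (f g : SchwartzMap 𝔼 ℝ) :
    Integrable (fun x : 𝔼 => x j * (f x * g x)) := by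
  obtain ⟨C, hC⟩ := schwartz_bound g
  have hmaj : Integrable (fun x : 𝔼 => (‖x‖ ^ 1 * ‖f x‖) * C) volume :=
    (f.integrable_pow_mul volume 1).mul_const C
  apply hmaj.mono'
  · exact (((EuclideanSpace.proj j).continuous).mul
      (f.continuous.mul g.continuous)).aestronglyMeasurable
  · filter_upwards with x
    have h1 : |x j| ≤ ‖x‖ := abs_coord_le_norm x j
    have h2 : ‖g x‖ ≤ C := hC x
    have h0 : (0:ℝ) ≤ ‖g x‖ := norm_nonneg _
    calc ‖x j * (f x * g x)‖ = |x j| * (‖f x‖ * ‖g x‖) := by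
          simp [abs_mul, Real.norm_eq_abs, mul_assoc]
      _ ≤ ‖x‖ * (‖f x‖ * C) := by
          apply mul_le_mul h1 (by nlinarith [norm_nonneg (f x)]) (by positivity) (norm_nonneg x)
      _ = ‖x‖ ^ 1 * ‖f x‖ * C := by ring

lemma ibp {f g f' g' : 𝔼 → ℝ} {v : 𝔼}
    (hf : ∀ x, HasLineDerivAt ℝ f (f' x) x v) (hg : ∀ x, HasLineDerivAt ℝ g (g' x) x v)
    (h1 : Integrable (fun x => f' x * g x)) (h2 : Integrable (fun x => f x * g' x))
    (h3 : Integrable (fun x => f x * g x)) :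
    ∫ x, f x * g' x = - ∫ x, f' x * g x := by
  have := integral_bilinear_hasLineDerivAt_right_eq_neg_left_of_integrable
    (μ := (volume : Measure 𝔼)) (B := ContinuousLinearMap.mul ℝ ℝ)
    (by simpa using h1) (by simpa using h2) (by simpa using h3) (fun x _ => hf x) (fun x _ => hg x)
  simpa using this

noncomputable def pderivCLM (_ : Type) (v : 𝔼) : 𝓢(𝔼, ℝ) →L[ℝ] 𝓢(𝔼, ℝ) :=
  LineDeriv.lineDerivOpCLM ℝ 𝓢(𝔼, ℝ) v

lemma SchwartzMap.pderivCLM_apply (T : Type) (v : 𝔼) (f : 𝓢(𝔼, ℝ)) (x : 𝔼) :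
    pderivCLM T v f x = fderiv ℝ (⇑f) x v :=
  SchwartzMap.lineDerivOp_apply_eq_fderiv v f x

lemma hld_schwartz (f : SchwartzMap 𝔼 ℝ) (v x : 𝔼) :
    HasLineDerivAt ℝ (⇑f) (pderivCLM ℝ v f x) x v := by
  rw [SchwartzMap.pderivCLM_apply]
  exact (f.differentiableAt.hasFDerivAt).hasLineDerivAt v

lemma pderiv_coe (f : SchwartzMap 𝔼 ℝ) (v : 𝔼) :
    ⇑(pderivCLM ℝ v f) = fun y => fderiv ℝ (⇑f) y v :=
  funext fun y => SchwartzMap.pderivCLM_apply ℝ v f y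

lemma fderiv_fderiv_apply (f : SchwartzMap 𝔼 ℝ) (v w x : 𝔼) :
    fderiv ℝ (fun y => fderiv ℝ (⇑f) y v) x w = fderiv ℝ (fderiv ℝ (⇑f)) x w v := by
  have hc : DifferentiableAt ℝ (fderiv ℝ (⇑f)) x := by
    have : ContDiff ℝ 1 (fderiv ℝ (⇑f)) :=
      (f.smooth 2).fderiv_right (by norm_cast)
    exact this.differentiable one_ne_zero x
  have := fderiv_clm_apply (c := fderiv ℝ (⇑f)) (u := fun _ => v) hc
    (differentiableAt_const v)
  rw [this]
  simp

lemma pderiv_symm (f : SchwartzMap 𝔼 ℝ) (v w : 𝔼) (x : 𝔼) :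
    pderivCLM ℝ w (pderivCLM ℝ v f) x = pderivCLM ℝ v (pderivCLM ℝ w f) x := by
  rw [SchwartzMap.pderivCLM_apply, SchwartzMap.pderivCLM_apply, pderiv_coe, pderiv_coe,
    fderiv_fderiv_apply, fderiv_fderiv_apply]
  have hder : ∀ y, HasFDerivAt (⇑f) (fderiv ℝ (⇑f) y) y :=
    fun y => f.differentiableAt.hasFDerivAt
  have hx : HasFDerivAt (fderiv ℝ (⇑f)) (fderiv ℝ (fderiv ℝ (⇑f)) x) x := by
    have : ContDiff ℝ 1 (fderiv ℝ (⇑f)) := (f.smooth 2).fderiv_right (by norm_cast)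
    exact (this.differentiable one_ne_zero x).hasFDerivAt
  exact second_derivative_symmetric hder hx w v

lemma coord_hld (j : Fin N) (x v : 𝔼) :
    HasLineDerivAt ℝ (fun y : 𝔼 => y j) (v j) x v := by
  have h := ((EuclideanSpace.proj (𝕜 := ℝ) j).hasFDerivAt (x := x)).hasLineDerivAt v
  simpa using h

noncomputable def D1 (Q : SchwartzMap 𝔼 ℝ) (i : Fin N) : SchwartzMap 𝔼 ℝ :=
  pderivCLM ℝ (EuclideanSpace.single i 1) Q

noncomputable def D2 (Q : SchwartzMap 𝔼 ℝ) (i j : Fin N) : SchwartzMap 𝔼 ℝ :=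
  D1 (D1 Q i) j

lemma hld_Q (Q : SchwartzMap 𝔼 ℝ) (i : Fin N) (x : 𝔼) :
    HasLineDerivAt ℝ (⇑Q) (D1 Q i x) x (EuclideanSpace.single i 1) :=
  hld_schwartz Q _ x

lemma hld_D1 (Q : SchwartzMap 𝔼 ℝ) (i j : Fin N) (x : 𝔼) :
    HasLineDerivAt ℝ (⇑(D1 Q i)) (D2 Q i j x) x (EuclideanSpace.single j 1) :=
  hld_schwartz (D1 Q i) _ x

lemma D2_symm (Q : SchwartzMap 𝔼 ℝ) (i j : Fin N) (x : 𝔼) :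
    D2 Q i j x = D2 Q j i x :=
  pderiv_symm Q (EuclideanSpace.single i 1) (EuclideanSpace.single j 1) x

lemma lap_eq (Q : SchwartzMap 𝔼 ℝ) (x : 𝔼) :
    lap (⇑Q) x = ∑ i, D2 Q i i x := by
  unfold lap
  refine Finset.sum_congr rfl fun i _ => ?_
  rw [D2, D1, D1, SchwartzMap.pderivCLM_apply, pderiv_coe]

/-- coordinate-function integration by parts -/
lemma ibp_coord (j : Fin N) {g g' : 𝔼 → ℝ}
    (hg : ∀ x, HasLineDerivAt ℝ g (g' x) x (EuclideanSpace.single j 1))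
    (h1 : Integrable g) (h2 : Integrable (fun x : 𝔼 => x j * g' x))
    (h3 : Integrable (fun x : 𝔼 => x j * g x)) :
    ∫ x : 𝔼, x j * g' x = - ∫ x : 𝔼, g x := by
  have hf : ∀ x : 𝔼, HasLineDerivAt ℝ (fun y : 𝔼 => y j) ((fun _ : 𝔼 => (1:ℝ)) x) x
      (EuclideanSpace.single j 1) := by
    intro x
    simpa [EuclideanSpace.single_apply] using coord_hld j x (EuclideanSpace.single j 1)
  have h := ibp hf hg (by simpa using h1) h2 h3
  simpa using h

/-- Step 1 : ∫ ∂ᵢ∂ᵢQ · Q = - ∫ (∂ᵢQ)² -/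
lemma step1 (Q : SchwartzMap 𝔼 ℝ) (i : Fin N) :
    ∫ x : 𝔼, D2 Q i i x * Q x = - ∫ x : 𝔼, D1 Q i x * D1 Q i x := by
  have h := ibp (v := EuclideanSpace.single i 1)
    (f := ⇑(D1 Q i)) (f' := fun x => D2 Q i i x) (g := ⇑Q) (g' := fun x => D1 Q i x)
    (fun x => hld_D1 Q i i x) (fun x => hld_Q Q i x)
    (int_SS (D2 Q i i) Q) (int_SS (D1 Q i) (D1 Q i)) (int_SS (D1 Q i) Q)
  linarith [h]

/-- Step 2a : 2 ∫ xⱼ Q ∂ⱼQ = - ∫ Q² -/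
lemma step2a (Q : SchwartzMap 𝔼 ℝ) (j : Fin N) :
    2 * ∫ x : 𝔼, x j * (Q x * D1 Q j x) = - ∫ x : 𝔼, Q x * Q x := by
  have hg : ∀ x : 𝔼, HasLineDerivAt ℝ (fun y => Q y * Q y)
      (D1 Q j x * Q x + Q x * D1 Q j x) x (EuclideanSpace.single j 1) :=
    fun x => hld_mul (hld_Q Q j x) (hld_Q Q j x)
  have h2 : Integrable (fun x : 𝔼 => x j * (D1 Q j x * Q x + Q x * D1 Q j x)) := by
    refine ((int_xSS j (D1 Q j) Q).add (int_xSS j Q (D1 Q j))).congr ?_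
    filter_upwards with x
    simp only [Pi.add_apply]
    ring
  have h := ibp_coord j hg (int_SS Q Q) h2 (int_xSS j Q Q)
  rw [show (fun x : 𝔼 => x j * (D1 Q j x * Q x + Q x * D1 Q j x))
      = fun x : 𝔼 => 2 * (x j * (Q x * D1 Q j x)) from funext fun x => by ring,
    integral_const_mul] at h
  exact h
lemma abs_rpow_mul_self {p : ℝ} (hp : 1 < p) (t : ℝ) :
    |t| ^ (p - 1) * t * t = |t| ^ (p + 1) := by
  have h2 : t * t = |t| ^ (2:ℝ) := by
    rw [show ((2:ℝ)) = ((2:ℕ):ℝ) by norm_num, Real.rpow_natCast, sq_abs, sq]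
  rw [mul_assoc, h2, ← Real.rpow_add' (abs_nonneg t) (by intro hc; linarith)]
  rw [show p - 1 + 2 = p + 1 from by ring]

lemma int_P {p : ℝ} (hp : 1 < p) (Q : SchwartzMap 𝔼 ℝ) {g : 𝔼 → ℝ} (hg : Integrable g) :
    Integrable (fun x : 𝔼 => |Q x| ^ (p - 1) * g x) := by
  obtain ⟨C, hC⟩ := schwartz_bound Q
  have hcont : Continuous (fun x : 𝔼 => |Q x| ^ (p - 1)) :=
    (Q.continuous.abs).rpow_const (fun x => Or.inr (by linarith))
  refine hg.bdd_mul hcont.aestronglyMeasurable (c := C ^ (p - 1)) (ae_of_all _ fun x => ?_)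
  rw [Real.norm_eq_abs, abs_of_nonneg (Real.rpow_nonneg (abs_nonneg _) _)]
  exact Real.rpow_le_rpow (abs_nonneg _) (by simpa [Real.norm_eq_abs] using hC x)
    (by linarith)

/-- Step 2b : (p+1) ∫ xⱼ |Q|^(p-1) Q ∂ⱼQ = - ∫ |Q|^(p+1) -/
lemma step2b {p : ℝ} (hp : 1 < p) (Q : SchwartzMap 𝔼 ℝ) (j : Fin N) :
    (p + 1) * ∫ x : 𝔼, x j * (|Q x| ^ (p - 1) * Q x * D1 Q j x)
      = - ∫ x : 𝔼, |Q x| ^ (p + 1) := by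
  have hg : ∀ x : 𝔼, HasLineDerivAt ℝ (fun y : 𝔼 => |Q y| ^ (p + 1))
      ((p + 1) * |Q x| ^ (p - 1) * Q x * D1 Q j x) x (EuclideanSpace.single j 1) := by
    intro x
    have hd : HasDerivAt (fun s : ℝ => |s| ^ (p + 1))
        ((p + 1) * |Q x| ^ (p + 1 - 2) * Q x) (Q x) :=
      hasDerivAt_abs_rpow (by linarith) (Q x)
    have h := hld_comp hd (hld_Q Q j x)
    have hexp : p + 1 - 2 = p - 1 := by ring
    rw [hexp] at h
    exact h
  have hInt1 : Integrable (fun x : 𝔼 => |Q x| ^ (p + 1)) := by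
    refine (int_P hp Q (int_SS Q Q)).congr ?_
    filter_upwards with x
    rw [← abs_rpow_mul_self hp (Q x)]; ring
  have hInt2 : Integrable (fun x : 𝔼 => x j * ((p + 1) * |Q x| ^ (p - 1) * Q x * D1 Q j x)) := by
    refine ((int_P hp Q (int_xSS j Q (D1 Q j))).const_mul (p + 1)).congr ?_
    filter_upwards with x; ring
  have hInt3 : Integrable (fun x : 𝔼 => x j * |Q x| ^ (p + 1)) := by
    refine (int_P hp Q (int_xSS j Q Q)).congr ?_
    filter_upwards with x
    rw [← abs_rpow_mul_self hp (Q x)]; ring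
  have h := ibp_coord j hg hInt1 hInt2 hInt3
  rw [show (fun x : 𝔼 => x j * ((p + 1) * |Q x| ^ (p - 1) * Q x * D1 Q j x))
      = fun x : 𝔼 => (p + 1) * (x j * (|Q x| ^ (p - 1) * Q x * D1 Q j x)) from
      funext fun x => by ring, integral_const_mul] at h
  exact h

/-- Step G : 2 ∑ᵢ ∫ xⱼ ∂ᵢQ ∂ⱼ∂ᵢQ = - ∑ᵢ ∫ (∂ᵢQ)² -/
lemma stepG (Q : SchwartzMap 𝔼 ℝ) (j : Fin N) :
    2 * ∑ i, ∫ x : 𝔼, x j * (D1 Q i x * D2 Q i j x)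
      = - ∑ i, ∫ x : 𝔼, D1 Q i x * D1 Q i x := by
  have hg : ∀ x : 𝔼, HasLineDerivAt ℝ (fun y : 𝔼 => ∑ i, D1 Q i y * D1 Q i y)
      (∑ i, (D2 Q i j x * D1 Q i x + D1 Q i x * D2 Q i j x)) x (EuclideanSpace.single j 1) :=
    fun x => hld_sum Finset.univ (fun i _ => hld_mul (hld_D1 Q i j x) (hld_D1 Q i j x))
  have hInt1 : Integrable (fun x : 𝔼 => ∑ i, D1 Q i x * D1 Q i x) :=
    integrable_finset_sum _ (fun i _ => int_SS _ _)
  have hInt2 : Integrable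
      (fun x : 𝔼 => x j * ∑ i, (D2 Q i j x * D1 Q i x + D1 Q i x * D2 Q i j x)) := by
    have h := integrable_finset_sum (μ := (volume : Measure 𝔼)) Finset.univ
      (fun (i : Fin N) _ => (int_xSS j (D2 Q i j) (D1 Q i)).add (int_xSS j (D1 Q i) (D2 Q i j)))
    refine h.congr ?_
    filter_upwards with x
    rw [Finset.mul_sum]
    exact Finset.sum_congr rfl fun i _ => by simp only [Pi.add_apply]; ring
  have hInt3 : Integrable (fun x : 𝔼 => x j * ∑ i, D1 Q i x * D1 Q i x) := by
    have h := integrable_finset_sum (μ := (volume : Measure 𝔼)) Finset.univ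
      (fun (i : Fin N) _ => int_xSS j (D1 Q i) (D1 Q i))
    refine h.congr ?_
    filter_upwards with x
    rw [Finset.mul_sum]
  have h := ibp_coord j hg hInt1 hInt2 hInt3
  rw [show (fun x : 𝔼 => x j * ∑ i, (D2 Q i j x * D1 Q i x + D1 Q i x * D2 Q i j x))
      = fun x : 𝔼 => ∑ i, 2 * (x j * (D1 Q i x * D2 Q i j x)) from funext fun x => by
        rw [Finset.mul_sum]; exact Finset.sum_congr rfl fun i _ => by ring,
    integral_finset_sum _ (fun i _ => (int_xSS j (D1 Q i) (D2 Q i j)).const_mul 2),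
    integral_finset_sum _ (fun i _ => int_SS (D1 Q i) (D1 Q i))] at h
  simp_rw [integral_const_mul] at h
  rw [← Finset.mul_sum] at h
  exact h

/-- Step T : ∫ ∂ᵢ∂ᵢQ · (xⱼ ∂ⱼQ) decomposition -/
lemma stepT (Q : SchwartzMap 𝔼 ℝ) (i j : Fin N) :
    ∫ x : 𝔼, D2 Q i i x * (x j * D1 Q j x)
      = -((EuclideanSpace.single i 1 : 𝔼) j * ∫ x : 𝔼, D1 Q i x * D1 Q j x)
        - ∫ x : 𝔼, x j * (D1 Q i x * D2 Q j i x) := by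
  set c : ℝ := (EuclideanSpace.single i 1 : 𝔼) j with hc
  have hg : ∀ x : 𝔼, HasLineDerivAt ℝ (fun y : 𝔼 => y j * D1 Q j y)
      (c * D1 Q j x + x j * D2 Q j i x) x (EuclideanSpace.single i 1) :=
    fun x => hld_mul (coord_hld j x (EuclideanSpace.single i 1)) (hld_D1 Q j i x)
  have h1 : Integrable (fun x : 𝔼 => D2 Q i i x * (x j * D1 Q j x)) := by
    refine (int_xSS j (D2 Q i i) (D1 Q j)).congr ?_
    filter_upwards with x; ring
  have h2 : Integrable (fun x : 𝔼 => D1 Q i x * (c * D1 Q j x + x j * D2 Q j i x)) := by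
    refine (((int_SS (D1 Q i) (D1 Q j)).const_mul c).add
      (int_xSS j (D1 Q i) (D2 Q j i))).congr ?_
    filter_upwards with x; simp only [Pi.add_apply]; ring
  have h3 : Integrable (fun x : 𝔼 => D1 Q i x * (x j * D1 Q j x)) := by
    refine (int_xSS j (D1 Q i) (D1 Q j)).congr ?_
    filter_upwards with x; ring
  have h := ibp (v := EuclideanSpace.single i 1)
    (f := ⇑(D1 Q i)) (f' := fun x => D2 Q i i x)
    (g := fun y : 𝔼 => y j * D1 Q j y) (g' := fun x => c * D1 Q j x + x j * D2 Q j i x)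
    (fun x => hld_D1 Q i i x) hg h1 h2 h3
  rw [show (fun x : 𝔼 => D1 Q i x * (c * D1 Q j x + x j * D2 Q j i x))
      = fun x : 𝔼 => c * (D1 Q i x * D1 Q j x) + x j * (D1 Q i x * D2 Q j i x) from
      funext fun x => by ring,
    integral_add ((int_SS (D1 Q i) (D1 Q j)).const_mul c)
      ((int_xSS j (D1 Q i) (D2 Q j i)).congr (by filter_upwards with x; ring)),
    integral_const_mul] at h
  linarith [h]
lemma int_pow1 {p : ℝ} (hp : 1 < p) (Q : SchwartzMap 𝔼 ℝ) :
    Integrable (fun x : 𝔼 => |Q x| ^ (p + 1)) := by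
  refine (int_P hp Q (int_SS Q Q)).congr ?_
  filter_upwards with x
  rw [← abs_rpow_mul_self hp (Q x)]; ring

lemma grad_sq (Q : SchwartzMap 𝔼 ℝ) (x : 𝔼) :
    ‖gradient (⇑Q) x‖ ^ 2 = ∑ i, D1 Q i x * D1 Q i x := by
  have hyi : ∀ i, gradient (⇑Q) x i = D1 Q i x := by
    intro i
    have hg : HasFDerivAt (⇑Q) ((InnerProductSpace.toDual ℝ 𝔼) (gradient (⇑Q) x)) x :=
      (Q.differentiableAt.hasGradientAt).hasFDerivAt
    have h1 : fderiv ℝ (⇑Q) x (EuclideanSpace.single i 1)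
        = (inner ℝ (gradient (⇑Q) x) (EuclideanSpace.single i (1:ℝ)) : ℝ) := by
      rw [hg.fderiv, InnerProductSpace.toDual_apply_apply]
    rw [D1, SchwartzMap.pderivCLM_apply, h1, EuclideanSpace.inner_single_right]
    simp
  rw [← real_inner_self_eq_norm_sq, PiLp.inner_apply]
  refine Finset.sum_congr rfl fun i _ => ?_
  rw [hyi i]
  simp [sq]

end PohAux

open PohAux in
/-- **First Pohozaev identity** for the ground-state equation `ΔQ - Q + |Q|^(p-1) Q = 0`:
`∫ |Q|^(p+1) = (2(p+1))/(N(p-1)) ∫ |∇Q|²`. -/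
theorem pohozaev_first (N : ℕ) (hN : 1 ≤ N) (p : ℝ) (hp : 1 < p)
    (Q : SchwartzMap (EuclideanSpace ℝ (Fin N)) ℝ)
    (hQ : ∀ x, lap (⇑Q) x - Q x + |Q x| ^ (p - 1) * Q x = 0) :
    (∫ x : EuclideanSpace ℝ (Fin N), |Q x| ^ (p + 1))
      = (2 * (p + 1)) / ((N : ℝ) * (p - 1))
        * ∫ x : EuclideanSpace ℝ (Fin N), ‖gradient (⇑Q) x‖ ^ 2 := by
  classical
  set a : ℝ := ∑ i, ∫ x : EuclideanSpace ℝ (Fin N), D1 Q i x * D1 Q i x with ha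
  set b : ℝ := ∫ x : EuclideanSpace ℝ (Fin N), Q x * Q x with hb
  set cI : ℝ := ∫ x : EuclideanSpace ℝ (Fin N), |Q x| ^ (p + 1) with hcI
  have hQeq : ∀ x, lap (⇑Q) x = Q x - |Q x| ^ (p - 1) * Q x := fun x => by linarith [hQ x]
  -- First identity: b - cI = -a
  have key1 : b - cI = -a := by
    have E1 : (∫ x : EuclideanSpace ℝ (Fin N), lap (⇑Q) x * Q x) = b - cI := by
      rw [show (fun x : EuclideanSpace ℝ (Fin N) => lap (⇑Q) x * Q x)
          = fun x => Q x * Q x - |Q x| ^ (p + 1) from funext fun x => by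
            rw [hQeq x, ← abs_rpow_mul_self hp (Q x)]; ring]
      exact integral_sub (int_SS Q Q) (int_pow1 hp Q)
    have E2 : (∫ x : EuclideanSpace ℝ (Fin N), lap (⇑Q) x * Q x)
        = ∑ i, ∫ x : EuclideanSpace ℝ (Fin N), D2 Q i i x * Q x := by
      rw [show (fun x : EuclideanSpace ℝ (Fin N) => lap (⇑Q) x * Q x)
          = fun x => ∑ i, D2 Q i i x * Q x from funext fun x => by
            rw [lap_eq, Finset.sum_mul]]
      exact integral_finset_sum _ (fun i _ => int_SS _ _)
    have E3 : (∑ i, ∫ x : EuclideanSpace ℝ (Fin N), D2 Q i i x * Q x) = -a := by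
      rw [ha, ← Finset.sum_neg_distrib]
      exact Finset.sum_congr rfl fun i _ => step1 Q i
    rw [← E1, E2, E3]
  -- notation for the second identity
  set u : Fin N → ℝ := fun j => ∑ i, ∫ x : EuclideanSpace ℝ (Fin N),
    x j * (D1 Q i x * D2 Q i j x) with hudef
  set M : Fin N → ℝ := fun j => ∫ x : EuclideanSpace ℝ (Fin N),
    x j * (Q x * D1 Q j x) with hMdef
  set Z : Fin N → ℝ := fun j => ∫ x : EuclideanSpace ℝ (Fin N),
    x j * (|Q x| ^ (p - 1) * Q x * D1 Q j x) with hZdef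
  set T : ℝ := ∑ i, ∑ j, ∫ x : EuclideanSpace ℝ (Fin N),
    D2 Q i i x * (x j * D1 Q j x) with hTdef
  set X : Fin N → Fin N → ℝ := fun i j =>
    (EuclideanSpace.single i 1 : EuclideanSpace ℝ (Fin N)) j
      * ∫ x : EuclideanSpace ℝ (Fin N), D1 Q i x * D1 Q j x with hXdef
  set Y : Fin N → Fin N → ℝ := fun i j =>
    ∫ x : EuclideanSpace ℝ (Fin N), x j * (D1 Q i x * D2 Q j i x) with hYdef
  -- eqA : T = -a - ∑ j, u j
  have hXdiag : ∀ i, ∑ j, X i j = ∫ x : EuclideanSpace ℝ (Fin N), D1 Q i x * D1 Q i x := by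
    intro i
    rw [show (fun j : Fin N => X i j)
        = fun j => if j = i then (∫ x : EuclideanSpace ℝ (Fin N), D1 Q i x * D1 Q j x) else 0
      from funext fun j => by
        rw [hXdef]
        simp only []
        rw [EuclideanSpace.single_apply]
        by_cases h : j = i <;> simp [h]]
    simp
  have hYsymm : ∀ i j, Y i j = ∫ x : EuclideanSpace ℝ (Fin N),
      x j * (D1 Q i x * D2 Q i j x) := by
    intro i j
    rw [hYdef]
    simp only []
    congr 1
    funext x
    rw [D2_symm Q j i x]
  have eqA : T = -a - ∑ j, u j := by
    calc T = ∑ i, (-(∑ j, X i j) - ∑ j, Y i j) := by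
          rw [hTdef]
          refine Finset.sum_congr rfl fun i _ => ?_
          rw [show -(∑ j, X i j) - ∑ j, Y i j = ∑ j, (-(X i j) - Y i j) by
            rw [Finset.sum_sub_distrib, Finset.sum_neg_distrib]]
          exact Finset.sum_congr rfl fun j _ => stepT Q i j
      _ = -a - ∑ j, u j := by
          rw [Finset.sum_sub_distrib, Finset.sum_neg_distrib, ha, hudef]
          congr 1
          · congr 1
            exact Finset.sum_congr rfl fun i _ => hXdiag i
          · rw [Finset.sum_comm]
            refine Finset.sum_congr rfl fun j _ => ?_
            simp only []
            exact Finset.sum_congr rfl fun i _ => hYsymm i j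
  -- eqB : 2 * ∑ j, u j = -N * a
  have eqB : 2 * ∑ j, u j = -(N:ℝ) * a := by
    rw [Finset.mul_sum]
    have : ∀ j : Fin N, 2 * u j = -a := fun j => by
      rw [hudef]; exact stepG Q j
    rw [Finset.sum_congr rfl fun j _ => this j]
    simp [Finset.sum_const, nsmul_eq_mul]
  -- eqC : 2 * ∑ j, M j = -N * b
  have eqC : 2 * ∑ j, M j = -(N:ℝ) * b := by
    rw [Finset.mul_sum]
    have : ∀ j : Fin N, 2 * M j = -b := fun j => by
      rw [hMdef]; exact step2a Q j
    rw [Finset.sum_congr rfl fun j _ => this j]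
    simp [Finset.sum_const, nsmul_eq_mul]
  -- eqD : (p+1) * ∑ j, Z j = -N * cI
  have eqD : (p + 1) * ∑ j, Z j = -(N:ℝ) * cI := by
    rw [Finset.mul_sum]
    have : ∀ j : Fin N, (p + 1) * Z j = -cI := fun j => by
      rw [hZdef]; exact step2b hp Q j
    rw [Finset.sum_congr rfl fun j _ => this j]
    simp [Finset.sum_const, nsmul_eq_mul]
  -- eqE : T = ∑ j, M j - ∑ j, Z j
  have eqE : T = ∑ j, M j - ∑ j, Z j := by
    have hlhs : (∫ x : EuclideanSpace ℝ (Fin N),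
        lap (⇑Q) x * (∑ j, x j * D1 Q j x)) = T := by
      rw [show (fun x : EuclideanSpace ℝ (Fin N) => lap (⇑Q) x * (∑ j, x j * D1 Q j x))
          = fun x => ∑ i, ∑ j, D2 Q i i x * (x j * D1 Q j x) from funext fun x => by
            rw [lap_eq, Finset.sum_mul_sum]]
      rw [hTdef]
      rw [integral_finset_sum _ (fun i _ => integrable_finset_sum _ (fun j _ =>
        (int_xSS j (D2 Q i i) (D1 Q j)).congr (by filter_upwards with x; ring)))]
      exact Finset.sum_congr rfl fun i _ => integral_finset_sum _ (fun j _ =>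
        (int_xSS j (D2 Q i i) (D1 Q j)).congr (by filter_upwards with x; ring))
    have hrhs : (∫ x : EuclideanSpace ℝ (Fin N),
        lap (⇑Q) x * (∑ j, x j * D1 Q j x)) = ∑ j, M j - ∑ j, Z j := by
      rw [show (fun x : EuclideanSpace ℝ (Fin N) => lap (⇑Q) x * (∑ j, x j * D1 Q j x))
          = fun x => (∑ j, x j * (Q x * D1 Q j x))
              - (∑ j, x j * (|Q x| ^ (p - 1) * Q x * D1 Q j x)) from funext fun x => by
            rw [hQeq x, sub_mul, Finset.mul_sum, Finset.mul_sum]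
            congr 1
            · exact Finset.sum_congr rfl fun j _ => by ring
            · exact Finset.sum_congr rfl fun j _ => by ring]
      rw [integral_sub
        (integrable_finset_sum _ (fun j _ =>
          (int_xSS j Q (D1 Q j)).congr (by filter_upwards with x; ring)))
        (integrable_finset_sum _ (fun j _ =>
          (int_P hp Q (int_xSS j Q (D1 Q j))).congr (by filter_upwards with x; ring)))]
      rw [integral_finset_sum _ (fun j _ =>
          (int_xSS j Q (D1 Q j)).congr (by filter_upwards with x; ring)),
        integral_finset_sum _ (fun j _ =>
          (int_P hp Q (int_xSS j Q (D1 Q j))).congr (by filter_upwards with x; ring))]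
    rw [← hlhs, hrhs]
  -- combine
  have hkey : 2 * (p + 1) * a = (N:ℝ) * ((p - 1) * cI) := by
    linear_combination (2*(p+1)) * eqA - (2*(p+1)) * eqE - (p+1) * eqB - (p+1) * eqC
      + 2 * eqD + ((N:ℝ)*(p+1)) * key1
  have hA : (∫ x : EuclideanSpace ℝ (Fin N), ‖gradient (⇑Q) x‖ ^ 2) = a := by
    rw [show (fun x : EuclideanSpace ℝ (Fin N) => ‖gradient (⇑Q) x‖ ^ 2)
        = fun x => ∑ i, D1 Q i x * D1 Q i x from funext fun x => grad_sq Q x]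
    rw [ha]
    exact integral_finset_sum _ (fun i _ => int_SS _ _)
  rw [hA]
  have hN0 : ((N:ℝ)) ≠ 0 := by
    have : (0:ℝ) < N := by exact_mod_cast Nat.lt_of_lt_of_le Nat.zero_lt_one hN
    linarith
  have hp1 : p - 1 ≠ 0 := by intro h; linarith [hp]
  field_simp
  linear_combination -hkey
end

section
/- Let N ≥ 1 be an integer, let p > 1, and let Q : ℝ^N → ℝ be a positive Schwartz function solving ΔQ − Q + Q^p = 0 pointwise on ℝ^N, with Q not identically zero. Set ΛQ := (2/(p−1))Q + x·∇Q, κ := (∫ ΛQ · Q dx)/(∫ Q² dx), and Z := ΛQ − κ Q. Then ∫_{ℝ^N} ( |∇Z|² + Z² − p Q^{p−1} Z² ) dx = −(N²(p−1)/(4(p+1))) · ( p − (1 + 4/N) ) · ∫_{ℝ^N} Q^{p+1} dx. In particular, if p > 1 + 4/N this quantity is strictly negative. -/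
open MeasureTheory SchwartzMap

/-- The scaling generator `Λf = (2/(p-1)) f + x · ∇f`. -/
noncomputable def scalingGen {N : ℕ} (p : ℝ) (f : EuclideanSpace ℝ (Fin N) → ℝ)
    (x : EuclideanSpace ℝ (Fin N)) : ℝ :=
  2 / (p - 1) * f x + ∑ i : Fin N, x i * fderiv ℝ f x (EuclideanSpace.single i 1)

noncomputable section
namespace LplusAux
variable {N : ℕ}

abbrev Es (N : ℕ) := EuclideanSpace ℝ (Fin N)
abbrev e (i : Fin N) : Es N := EuclideanSpace.single i 1

/-- smoothness shorthand -/
abbrev Sm (g : Es N → ℝ) : Prop := ContDiff ℝ ((⊤ : ℕ∞) : WithTop ℕ∞) g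

def cm (i : Fin N) : 𝓢(Es N, ℝ) →L[ℝ] 𝓢(Es N, ℝ) :=
  SchwartzMap.bilinLeftCLM (ContinuousLinearMap.mul ℝ ℝ)
    (EuclideanSpace.proj (𝕜 := ℝ) i).hasTemperateGrowth

lemma cm_apply (i : Fin N) (f : 𝓢(Es N, ℝ)) (x : Es N) : cm i f x = f x * x i := rfl

def pd (i : Fin N) : 𝓢(Es N, ℝ) →L[ℝ] 𝓢(Es N, ℝ) := LineDeriv.lineDerivOpCLM ℝ 𝓢(Es N, ℝ) (e i)

lemma pd_apply (i : Fin N) (f : 𝓢(Es N, ℝ)) (x : Es N) :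
    pd i f x = fderiv ℝ (⇑f) x (e i) := rfl

lemma pd_coe (i : Fin N) (f : 𝓢(Es N, ℝ)) :
    ⇑(pd i f) = fun x => fderiv ℝ (⇑f) x (e i) := rfl

lemma bddS (f : 𝓢(Es N, ℝ)) : ∃ C, ∀ x, ‖f x‖ ≤ C := by
  refine ⟨(SchwartzMap.seminorm ℝ 0 0) f, fun x => ?_⟩
  simpa using f.le_seminorm ℝ 0 0 x

lemma mulint (f : 𝓢(Es N, ℝ)) {g : Es N → ℝ} (hg : Continuous g)
    (hbd : ∃ C, ∀ x, ‖g x‖ ≤ C) : Integrable (fun x => f x * g x) := by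
  have := (f.integrable (μ := volume)).bdd_mul hg.aestronglyMeasurable (Filter.Eventually.of_forall hbd.choose_spec)
  simpa [mul_comm] using this

lemma mulintS (f g : 𝓢(Es N, ℝ)) : Integrable (fun x => f x * g x) :=
  mulint f g.continuous (bddS g)

lemma sum_apply {s : Finset (Fin N)} (f : Fin N → 𝓢(Es N, ℝ)) (x : Es N) :
    (∑ i ∈ s, f i) x = ∑ i ∈ s, f i x := by
  induction s using Finset.induction_on with
  | empty => simp
  | @insert a s h ih => simp [Finset.sum_insert h, SchwartzMap.add_apply, ih]

lemma smooth_schwartz (f : 𝓢(Es N, ℝ)) : Sm ⇑f := f.smooth ⊤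

lemma smdiff {g : Es N → ℝ} (hg : Sm g) : Differentiable ℝ g :=
  hg.differentiable (by simp)

lemma smoothD {g : Es N → ℝ} (hg : Sm g) (v : Es N) :
    Sm (fun x => fderiv ℝ g x v) := by
  have h1 : ContDiff ℝ ((⊤ : ℕ∞) : WithTop ℕ∞) (fderiv ℝ g) := hg.fderiv_right (le_refl _)
  exact h1.clm_apply contDiff_const

lemma symm2 {g : Es N → ℝ} (hg : Sm g) (x : Es N) (v w : Es N) :
    fderiv ℝ (fun y => fderiv ℝ g y v) x w = fderiv ℝ (fun y => fderiv ℝ g y w) x v := by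
  have hg' : ContDiff ℝ ((⊤ : ℕ∞) : WithTop ℕ∞) (fderiv ℝ g) := hg.fderiv_right (le_refl _)
  have hd : ∀ y, HasFDerivAt g (fderiv ℝ g y) y := fun y => (smdiff hg y).hasFDerivAt
  have hd2 : HasFDerivAt (fderiv ℝ g) (fderiv ℝ (fderiv ℝ g) x) x :=
    (hg'.differentiable (by simp) x).hasFDerivAt
  have hsymm := second_derivative_symmetric hd hd2
  have key : ∀ u : Es N, fderiv ℝ (fun y => fderiv ℝ g y u) x
      = (fderiv ℝ (fderiv ℝ g) x).flip u := by
    intro u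
    have := fderiv_clm_apply (𝕜 := ℝ) (c := fderiv ℝ g) (u := fun _ => u)
      (hg'.differentiable (by simp) x) (differentiableAt_const u)
    simpa [fderiv_fun_const] using this
  rw [key v, key w]
  simpa using hsymm w v

lemma fderiv_coord (j : Fin N) (x v : Es N) :
    fderiv ℝ (fun y : Es N => y j) x v = v j := by
  have h : (fun y : Es N => y j) = ⇑(EuclideanSpace.proj (𝕜 := ℝ) j) := rfl
  rw [h, ContinuousLinearMap.fderiv]; rfl

lemma diff_coord (j : Fin N) : Differentiable ℝ (fun y : Es N => y j) :=
  (EuclideanSpace.proj (𝕜 := ℝ) j).differentiable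

lemma e_apply (i j : Fin N) : (e i) j = if i = j then 1 else 0 := by
  simp [EuclideanSpace.single_apply, eq_comm]

lemma fderiv_mul_apply {f g : Es N → ℝ} {x : Es N} (hf : DifferentiableAt ℝ f x)
    (hg : DifferentiableAt ℝ g x) (v : Es N) :
    fderiv ℝ (fun y => f y * g y) x v = f x * fderiv ℝ g x v + fderiv ℝ f x v * g x := by
  rw [fderiv_fun_mul hf hg]
  simp [mul_comm]

lemma fderiv_rpow {f : Es N → ℝ} {x : Es N} (hf : DifferentiableAt ℝ f x)
    (hfx : 0 < f x) (r : ℝ) (v : Es N) :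
    fderiv ℝ (fun y => f y ^ r) x v = r * f x ^ (r - 1) * fderiv ℝ f x v := by
  have h1 : HasDerivAt (fun t : ℝ => t ^ r) (r * f x ^ (r - 1)) (f x) :=
    Real.hasDerivAt_rpow_const (Or.inl hfx.ne')
  have h2 : HasFDerivAt (fun y => f y ^ r) ((r * f x ^ (r - 1)) • fderiv ℝ f x) x :=
    h1.comp_hasFDerivAt x hf.hasFDerivAt
  rw [h2.fderiv]; simp [mul_assoc]

lemma diff_rpow {f : Es N → ℝ} {x : Es N} (hf : DifferentiableAt ℝ f x)
    (hfx : 0 < f x) (r : ℝ) :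
    DifferentiableAt ℝ (fun y => f y ^ r) x :=
  ((Real.hasDerivAt_rpow_const (p := r) (Or.inl hfx.ne')).comp_hasFDerivAt x
    hf.hasFDerivAt).differentiableAt

def LamS (p : ℝ) (Q : 𝓢(Es N, ℝ)) : 𝓢(Es N, ℝ) :=
  (2 / (p - 1)) • Q + ∑ j : Fin N, cm j (pd j Q)

lemma LamS_apply (p : ℝ) (Q : 𝓢(Es N, ℝ)) (x : Es N) :
    LamS p Q x = scalingGen p (⇑Q) x := by
  simp only [LamS, SchwartzMap.add_apply, SchwartzMap.smul_apply, sum_apply, cm_apply,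
    pd_apply, scalingGen, smul_eq_mul]
  congr 1
  exact Finset.sum_congr rfl fun j _ => mul_comm _ _

lemma LamS_coe (p : ℝ) (Q : 𝓢(Es N, ℝ)) : ⇑(LamS p Q) = scalingGen p ⇑Q :=
  funext (LamS_apply p Q)

lemma grad_norm_sq (f : Es N → ℝ) (x : Es N) :
    ‖gradient f x‖ ^ 2 = ∑ i : Fin N, (fderiv ℝ f x (e i)) ^ 2 := by
  have h1 : ∀ i, gradient f x i = fderiv ℝ f x (e i) := by
    intro i
    have h2 : (inner ℝ (gradient f x) (e i) : ℝ) = fderiv ℝ f x (e i) := by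
      rw [gradient, InnerProductSpace.toDual_symm_apply]
    rw [← h2, EuclideanSpace.inner_single_right]
    simp
  rw [EuclideanSpace.norm_eq, Real.sq_sqrt (by positivity)]
  exact Finset.sum_congr rfl fun i _ => by rw [← h1 i]; simp [sq_abs]

section PDE
variable (p : ℝ) (Q : 𝓢(Es N, ℝ))

lemma diff_dQ (f : 𝓢(Es N, ℝ)) (v : Es N) :
    Differentiable ℝ (fun y => fderiv ℝ (⇑f) y v) :=
  smdiff (smoothD (smooth_schwartz f) v)

lemma dLam (x : Es N) (i : Fin N) :
    fderiv ℝ (⇑(LamS p Q)) x (e i)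
      = 2 / (p - 1) * fderiv ℝ (⇑Q) x (e i) + fderiv ℝ (⇑Q) x (e i)
        + ∑ j : Fin N, x j * fderiv ℝ (fun y => fderiv ℝ (⇑Q) y (e j)) x (e i) := by
  have hQd : Differentiable ℝ ⇑Q := Q.differentiable
  have hdQ : ∀ j : Fin N, Differentiable ℝ (fun y => fderiv ℝ (⇑Q) y (e j)) :=
    fun j => diff_dQ Q (e j)
  have hterm : ∀ j : Fin N, Differentiable ℝ (fun y : Es N => y j * fderiv ℝ (⇑Q) y (e j)) :=
    fun j => (diff_coord j).mul (hdQ j)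
  have hsum : Differentiable ℝ (fun y : Es N => ∑ j : Fin N, y j * fderiv ℝ (⇑Q) y (e j)) := by
    apply Differentiable.fun_sum
    exact fun j _ => hterm j
  have hQc : Differentiable ℝ (fun y => 2 / (p - 1) * Q y) := hQd.const_mul _
  rw [LamS_coe]
  show fderiv ℝ (fun y => 2 / (p - 1) * Q y
      + ∑ j : Fin N, y j * fderiv ℝ (⇑Q) y (e j)) x (e i) = _
  rw [fderiv_fun_add (hQc.differentiableAt) (hsum.differentiableAt)]
  simp only [ContinuousLinearMap.add_apply]
  rw [fderiv_const_mul hQd.differentiableAt, fderiv_fun_sum (fun j _ => (hterm j).differentiableAt)]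
  simp only [ContinuousLinearMap.smul_apply, smul_eq_mul, ContinuousLinearMap.sum_apply]
  have hj : ∀ j : Fin N, fderiv ℝ (fun y : Es N => y j * fderiv ℝ (⇑Q) y (e j)) x (e i)
      = x j * fderiv ℝ (fun y => fderiv ℝ (⇑Q) y (e j)) x (e i)
        + (if i = j then 1 else 0) * fderiv ℝ (⇑Q) x (e j) := by
    intro j
    rw [fderiv_mul_apply (diff_coord j).differentiableAt (hdQ j).differentiableAt,
      fderiv_coord, e_apply]
  rw [Finset.sum_congr rfl (fun j _ => hj j), Finset.sum_add_distrib]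
  simp only [ite_mul, one_mul, zero_mul, Finset.sum_ite_eq, Finset.mem_univ, if_true]
  ring

lemma dLam_coe (i : Fin N) :
    ⇑(pd i (LamS p Q)) = fun x =>
      2 / (p - 1) * fderiv ℝ (⇑Q) x (e i) + fderiv ℝ (⇑Q) x (e i)
        + ∑ j : Fin N, x j * fderiv ℝ (fun y => fderiv ℝ (⇑Q) y (e j)) x (e i) :=
  funext fun x => dLam p Q x i

lemma ddLam (x : Es N) (i : Fin N) :
    pd i (pd i (LamS p Q)) x
      = 2 / (p - 1) * fderiv ℝ (fun y => fderiv ℝ (⇑Q) y (e i)) x (e i)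
        + 2 * fderiv ℝ (fun y => fderiv ℝ (⇑Q) y (e i)) x (e i)
        + ∑ j : Fin N, x j *
            fderiv ℝ (fun y => fderiv ℝ (fun z => fderiv ℝ (⇑Q) z (e j)) y (e i)) x (e i) := by
  have hdQ : ∀ j : Fin N, Differentiable ℝ (fun y => fderiv ℝ (⇑Q) y (e j)) :=
    fun j => diff_dQ Q (e j)
  have hd2 : ∀ j : Fin N,
      Differentiable ℝ (fun y => fderiv ℝ (fun z => fderiv ℝ (⇑Q) z (e j)) y (e i)) :=
    fun j => smdiff (smoothD (smoothD (smooth_schwartz Q) (e j)) (e i))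
  have hterm : ∀ j : Fin N, Differentiable ℝ
      (fun y : Es N => y j * fderiv ℝ (fun z => fderiv ℝ (⇑Q) z (e j)) y (e i)) :=
    fun j => (diff_coord j).mul (smdiff (smoothD (smoothD (smooth_schwartz Q) (e j)) (e i)))
  have hsum : Differentiable ℝ (fun y : Es N =>
      ∑ j : Fin N, y j * fderiv ℝ (fun z => fderiv ℝ (⇑Q) z (e j)) y (e i)) := by
    apply Differentiable.fun_sum; exact fun j _ => hterm j
  have hA : Differentiable ℝ (fun y => 2 / (p - 1) * fderiv ℝ (⇑Q) y (e i)) :=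
    (hdQ i).const_mul _
  have hAB : Differentiable ℝ
      (fun y => 2 / (p - 1) * fderiv ℝ (⇑Q) y (e i) + fderiv ℝ (⇑Q) y (e i)) :=
    hA.add (hdQ i)
  rw [pd_apply, dLam_coe]
  rw [fderiv_fun_add (hAB.differentiableAt) (hsum.differentiableAt)]
  simp only [ContinuousLinearMap.add_apply]
  rw [fderiv_fun_add (hA.differentiableAt) ((hdQ i).differentiableAt)]
  simp only [ContinuousLinearMap.add_apply]
  rw [fderiv_const_mul ((hdQ i).differentiableAt), fderiv_fun_sum (fun j _ => (hterm j).differentiableAt)]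
  simp only [ContinuousLinearMap.smul_apply, smul_eq_mul, ContinuousLinearMap.sum_apply]
  have hj : ∀ j : Fin N,
      fderiv ℝ (fun y : Es N => y j * fderiv ℝ (fun z => fderiv ℝ (⇑Q) z (e j)) y (e i)) x (e i)
      = x j * fderiv ℝ (fun y => fderiv ℝ (fun z => fderiv ℝ (⇑Q) z (e j)) y (e i)) x (e i)
        + (if i = j then 1 else 0) * fderiv ℝ (fun z => fderiv ℝ (⇑Q) z (e j)) x (e i) := by
    intro j
    rw [fderiv_mul_apply (diff_coord j).differentiableAt ((hd2 j)).differentiableAt,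
      fderiv_coord, e_apply]
  rw [Finset.sum_congr rfl (fun j _ => hj j), Finset.sum_add_distrib]
  simp only [ite_mul, one_mul, zero_mul, Finset.sum_ite_eq, Finset.mem_univ, if_true]
  have hsymm : fderiv ℝ (fun z => fderiv ℝ (⇑Q) z (e i)) x (e i)
      = fderiv ℝ (fun y => fderiv ℝ (⇑Q) y (e i)) x (e i) := rfl
  ring

lemma clairaut (x : Es N) (j : Fin N) :
    ∑ i : Fin N,
        fderiv ℝ (fun y => fderiv ℝ (fun z => fderiv ℝ (⇑Q) z (e j)) y (e i)) x (e i)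
      = fderiv ℝ (lap (⇑Q)) x (e j) := by
  have hs : ∀ i : Fin N,
      fderiv ℝ (fun y => fderiv ℝ (fun z => fderiv ℝ (⇑Q) z (e j)) y (e i)) x (e i)
      = fderiv ℝ (fun y => fderiv ℝ (fun z => fderiv ℝ (⇑Q) z (e i)) y (e i)) x (e j) := by
    intro i
    have h1 : (fun y => fderiv ℝ (fun z => fderiv ℝ (⇑Q) z (e j)) y (e i))
        = (fun y => fderiv ℝ (fun z => fderiv ℝ (⇑Q) z (e i)) y (e j)) :=
      funext fun y => symm2 (smooth_schwartz Q) y (e j) (e i)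
    rw [h1]
    exact symm2 (smoothD (smooth_schwartz Q) (e i)) x (e j) (e i)
  rw [Finset.sum_congr rfl (fun i _ => hs i)]
  have h2 : fderiv ℝ (fun y => ∑ i : Fin N,
      fderiv ℝ (fun z => fderiv ℝ (⇑Q) z (e i)) y (e i)) x (e j)
      = ∑ i : Fin N, fderiv ℝ (fun y =>
          fderiv ℝ (fun z => fderiv ℝ (⇑Q) z (e i)) y (e i)) x (e j) := by
    rw [fderiv_fun_sum (fun i _ =>
      (smdiff (smoothD (smoothD (smooth_schwartz Q) (e i)) (e i))).differentiableAt)]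
    simp only [ContinuousLinearMap.sum_apply]
  rw [← h2]
  rfl

lemma lapLam (x : Es N) :
    (∑ i : Fin N, pd i (pd i (LamS p Q)) x)
      = (2 / (p - 1) + 2) * lap (⇑Q) x
        + ∑ j : Fin N, x j * fderiv ℝ (lap (⇑Q)) x (e j) := by
  rw [Finset.sum_congr rfl (fun i _ => ddLam p Q x i)]
  rw [Finset.sum_add_distrib, Finset.sum_add_distrib]
  rw [Finset.sum_comm]
  have h1 : ∀ j : Fin N, ∑ i : Fin N, x j *
      fderiv ℝ (fun y => fderiv ℝ (fun z => fderiv ℝ (⇑Q) z (e j)) y (e i)) x (e i)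
      = x j * fderiv ℝ (lap (⇑Q)) x (e j) := by
    intro j
    rw [← Finset.mul_sum, clairaut]
  rw [Finset.sum_congr rfl (fun j _ => h1 j)]
  have h2 : lap (⇑Q) x = ∑ i : Fin N, fderiv ℝ (fun y => fderiv ℝ (⇑Q) y (e i)) x (e i) := rfl
  rw [h2, ← Finset.mul_sum, ← Finset.mul_sum]
  ring
end PDE
section LIN
variable {p : ℝ} (hp : 1 < p) (Q : 𝓢(Es N, ℝ)) (hQpos : ∀ x, 0 < Q x)
  (hQeq : ∀ x, lap (⇑Q) x - Q x + Q x ^ p = 0)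

include hQeq in
lemma hlap : ∀ y, lap (⇑Q) y = Q y - Q y ^ p := fun y => by linarith [hQeq y]

include hQpos in
lemma rpow_cancel (x : Es N) : Q x ^ (p - 1) * Q x = Q x ^ p := by
  have h1 : Q x ^ (p - 1) * Q x ^ (1 : ℝ) = Q x ^ (p - 1 + 1) :=
    (Real.rpow_add (hQpos x) _ _).symm
  rw [Real.rpow_one] at h1
  rw [h1]; norm_num

include hQpos hQeq in
lemma dlap (x : Es N) (j : Fin N) :
    fderiv ℝ (lap (⇑Q)) x (e j)
      = fderiv ℝ (⇑Q) x (e j) - p * Q x ^ (p - 1) * fderiv ℝ (⇑Q) x (e j) := by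
  have hlapf : lap (⇑Q) = fun y => Q y - Q y ^ p := funext (hlap Q hQeq)
  rw [hlapf, fderiv_fun_sub Q.differentiable.differentiableAt
    (diff_rpow Q.differentiable.differentiableAt (hQpos x) p)]
  simp only [ContinuousLinearMap.sub_apply]
  rw [fderiv_rpow Q.differentiable.differentiableAt (hQpos x) p]

include hp hQpos hQeq in
lemma Lplus_Lam (x : Es N) :
    LamS p Q x - (∑ i : Fin N, pd i (pd i (LamS p Q)) x)
      - p * Q x ^ (p - 1) * LamS p Q x = -2 * Q x := by
  have hp1 : p - 1 ≠ 0 := by linarith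
  have hD : ∑ j : Fin N, x j * fderiv ℝ (lap (⇑Q)) x (e j)
      = (∑ j : Fin N, x j * fderiv ℝ (⇑Q) x (e j))
        - p * Q x ^ (p - 1) * ∑ j : Fin N, x j * fderiv ℝ (⇑Q) x (e j) := by
    rw [Finset.mul_sum, ← Finset.sum_sub_distrib]
    refine Finset.sum_congr rfl fun j _ => ?_
    rw [dlap Q hQpos hQeq x j]; ring
  rw [lapLam, LamS_apply, scalingGen, hD, hlap Q hQeq x, ← rpow_cancel Q hQpos x]
  field_simp
  ring

include hQpos hQeq in
lemma Lplus_Q (x : Es N) :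
    Q x - (∑ i : Fin N, pd i (pd i Q) x) - p * Q x ^ (p - 1) * Q x = (1 - p) * Q x ^ p := by
  have h0 : (∑ i : Fin N, pd i (pd i Q) x) = lap (⇑Q) x := rfl
  rw [h0, hlap Q hQeq x, ← rpow_cancel Q hQpos x]
  ring

/-- `Z` as a Schwartz map, for a parameter `κ`. -/
def ZS (p κ : ℝ) (Q : 𝓢(Es N, ℝ)) : 𝓢(Es N, ℝ) := LamS p Q - κ • Q

lemma ZS_apply (κ : ℝ) (x : Es N) : ZS p κ Q x = LamS p Q x - κ * Q x := rfl

include hp hQpos hQeq in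
lemma Lplus_Z (κ : ℝ) (x : Es N) :
    ZS p κ Q x - (∑ i : Fin N, pd i (pd i (ZS p κ Q)) x)
      - p * Q x ^ (p - 1) * ZS p κ Q x = -2 * Q x - κ * ((1 - p) * Q x ^ p) := by
  have hsub : ∀ i : Fin N, pd i (pd i (ZS p κ Q)) x
      = pd i (pd i (LamS p Q)) x - κ * pd i (pd i Q) x := by
    intro i
    have h : pd i (pd i (ZS p κ Q)) = pd i (pd i (LamS p Q)) - κ • pd i (pd i Q) := by
      simp only [ZS, map_sub, _root_.map_smul]
    rw [h, SchwartzMap.sub_apply, SchwartzMap.smul_apply, smul_eq_mul]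
  rw [Finset.sum_congr rfl (fun i _ => hsub i), Finset.sum_sub_distrib, ← Finset.mul_sum,
    ZS_apply]
  have h1 := Lplus_Lam hp Q hQpos hQeq x
  have h2 := Lplus_Q Q hQpos hQeq x
  linear_combination h1 - κ * h2
end LIN
section INT
variable {p : ℝ} (hp : 1 < p) (Q : 𝓢(Es N, ℝ)) (hQpos : ∀ x, 0 < Q x)

include hQpos in
lemma Qr_cont (r : ℝ) : Continuous (fun x => Q x ^ r) :=
  Q.continuous.rpow_const (fun x => Or.inl (hQpos x).ne')

include hQpos in
lemma Qr_bdd (r : ℝ) (hr : 0 ≤ r) : ∃ C, ∀ x, ‖Q x ^ r‖ ≤ C := by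
  obtain ⟨C, hC⟩ := bddS Q
  refine ⟨(max C 1) ^ r, fun x => ?_⟩
  have h1 : Q x ≤ max C 1 := le_trans (le_trans (le_abs_self _) (hC x)) (le_max_left _ _)
  have h2 : (0:ℝ) ≤ Q x ^ r := Real.rpow_nonneg (hQpos x).le r
  rw [Real.norm_eq_abs, abs_of_nonneg h2]
  exact Real.rpow_le_rpow (hQpos x).le h1 hr

/-- Integration by parts: `∫ (∂ᵢ f)² = - ∫ f ∂ᵢ∂ᵢ f` for Schwartz `f`. -/
lemma ibp_self (f : 𝓢(Es N, ℝ)) (i : Fin N) :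
    ∫ x, (pd i f x) ^ 2 = -∫ x, f x * pd i (pd i f) x := by
  have key := integral_mul_fderiv_eq_neg_fderiv_mul_of_integrable
    (μ := (volume : Measure (Es N))) (f := ⇑f) (g := ⇑(pd i f)) (v := e i)
    (mulintS (pd i f) (pd i f)) (mulintS f (pd i (pd i f))) (mulintS f (pd i f))
    (fun x _ => f.differentiable x) (fun x _ => (pd i f).differentiable x)
  have h2 : ∫ x, f x * pd i (pd i f) x = -∫ x, pd i f x * pd i f x := key
  simp only [pow_two]
  linarith [h2]

/-- Integration by parts against the coordinate `x i`. -/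
lemma ibp_coord (i : Fin N) (g : Es N → ℝ) (hg : Differentiable ℝ g)
    (h1 : Integrable (fun x : Es N => x i * fderiv ℝ g x (e i)))
    (h2 : Integrable g) (h3 : Integrable (fun x : Es N => x i * g x)) :
    ∫ x, x i * fderiv ℝ g x (e i) = -∫ x, g x := by
  have h0 : ∀ x : Es N, fderiv ℝ (fun y : Es N => y i) x (e i) = 1 := fun x => by
    rw [fderiv_coord]; simp [e_apply]
  have key := integral_mul_fderiv_eq_neg_fderiv_mul_of_integrable
    (μ := (volume : Measure (Es N))) (f := fun y : Es N => y i) (g := g) (v := e i)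
    (by simp only [h0, one_mul]; exact h2)
    h1 h3 (fun x _ => diff_coord i x) (fun x _ => hg x)
  simp only [h0, one_mul] at key
  exact key

lemma int_congr' {f g : Es N → ℝ} (hf : Integrable f) (h : ∀ x, f x = g x) :
    Integrable g :=
  hf.congr (Filter.Eventually.of_forall h)

lemma ieq {f g : Es N → ℝ} (h : ∀ x, f x = g x) : ∫ x, f x = ∫ x, g x :=
  integral_congr_ae (Filter.Eventually.of_forall h)

include hQpos in
lemma rpow_cancel_r (r : ℝ) (x : Es N) : Q x ^ (r - 1) * Q x = Q x ^ r := by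
  have h1 : Q x ^ (r - 1) * Q x ^ (1 : ℝ) = Q x ^ (r - 1 + 1) :=
    (Real.rpow_add (hQpos x) _ _).symm
  rw [Real.rpow_one] at h1
  rw [h1]; norm_num

include hQpos in
lemma int_Qr (r : ℝ) (hr : 1 ≤ r) : Integrable (fun x : Es N => Q x ^ r) := by
  refine int_congr' (mulint Q (Qr_cont Q hQpos (r-1)) (Qr_bdd Q hQpos (r-1) (by linarith)))
    fun x => ?_
  rw [mul_comm, rpow_cancel_r Q hQpos r x]

include hQpos in
lemma int_xQr (i : Fin N) (r : ℝ) (hr : 1 ≤ r) :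
    ∫ x : Es N, x i * (r * Q x ^ (r - 1) * pd i Q x) = -∫ x : Es N, Q x ^ r := by
  have hg : Differentiable ℝ (fun x : Es N => Q x ^ r) := fun x =>
    diff_rpow Q.differentiable.differentiableAt (hQpos x) r
  have hder : ∀ x : Es N, fderiv ℝ (fun y : Es N => Q y ^ r) x (e i)
      = r * Q x ^ (r - 1) * pd i Q x := fun x =>
    fderiv_rpow Q.differentiable.differentiableAt (hQpos x) r (e i)
  have hC := Qr_bdd Q hQpos (r - 1) (by linarith)
  obtain ⟨C, hCle⟩ := hC
  have h1 : Integrable (fun x : Es N => x i * fderiv ℝ (fun y : Es N => Q y ^ r) x (e i)) := by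
    have hb : ∃ C', ∀ x : Es N, ‖r * Q x ^ (r - 1)‖ ≤ C' := by
      refine ⟨|r| * C, fun x => ?_⟩
      rw [norm_mul]
      exact mul_le_mul_of_nonneg_left (hCle x) (abs_nonneg r)
    refine int_congr' (mulint (cm i (pd i Q))
      (continuous_const.mul (Qr_cont Q hQpos (r-1))) hb) fun x => ?_
    rw [cm_apply, hder x, Pi.mul_apply]; ring
  have h2 : Integrable (fun x : Es N => Q x ^ r) := int_Qr Q hQpos r hr
  have h3 : Integrable (fun x : Es N => x i * Q x ^ r) := by
    refine int_congr' (mulint (cm i Q) (Qr_cont Q hQpos (r-1)) ⟨C, hCle⟩) fun x => ?_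
    rw [cm_apply, ← rpow_cancel_r Q hQpos r x]; ring
  have key := ibp_coord i (fun x : Es N => Q x ^ r) hg h1 h2 h3
  rw [← key]
  exact ieq fun x => by rw [hder x]

include hQpos in
lemma int_xQ2 (i : Fin N) :
    ∫ x : Es N, x i * pd i Q x * Q x = -(1/2) * ∫ x : Es N, (Q x) ^ 2 := by
  have h2 := int_xQr Q hQpos i 2 (by norm_num)
  have hr1 : ∀ x : Es N, Q x ^ ((2:ℝ) - 1) = Q x := fun x => by
    norm_num
  have hr2 : ∀ x : Es N, Q x ^ (2:ℝ) = (Q x) ^ 2 := fun x => by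
    rw [show (2:ℝ) = ((2:ℕ):ℝ) by norm_num, Real.rpow_natCast]
  rw [ieq (g := fun x : Es N => 2 * (x i * pd i Q x * Q x)) fun x => by rw [hr1 x]; ring,
    ieq (f := fun x : Es N => Q x ^ (2:ℝ)) (g := fun x : Es N => (Q x)^2) hr2] at h2
  rw [integral_const_mul] at h2
  linarith [h2]

include hp hQpos in
lemma int_xQp1 (i : Fin N) :
    ∫ x : Es N, x i * pd i Q x * Q x ^ p
      = -(1/(p+1)) * ∫ x : Es N, Q x ^ (p+1) := by
  have hp1 : (1:ℝ) ≤ p + 1 := by nlinarith [hp]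
  have h2 := int_xQr Q hQpos i (p+1) hp1
  have hr1 : ∀ x : Es N, Q x ^ ((p+1) - 1) = Q x ^ p := fun x => by norm_num
  rw [ieq (g := fun x : Es N => (p+1) * (x i * pd i Q x * Q x ^ p)) fun x => by
    rw [hr1 x]; ring] at h2
  rw [integral_const_mul] at h2
  have hpne : p + 1 ≠ 0 := by linarith
  field_simp
  linarith [h2]

end INT
section INT2
variable {p : ℝ} (hp : 1 < p) (Q : 𝓢(Es N, ℝ)) (hQpos : ∀ x, 0 < Q x)

include hQpos in
lemma hQQp1 : ∀ x : Es N, Q x * Q x ^ p = Q x ^ (p+1) := by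
  intro x
  have h := rpow_cancel_r Q hQpos (p+1) x
  have h2 : Q x ^ (p + 1 - 1) = Q x ^ p := by norm_num
  rw [h2] at h
  rw [← h]; ring

include hQpos in
lemma int_LamQ :
    ∫ x : Es N, LamS p Q x * Q x = (2/(p-1) - N/2) * ∫ x : Es N, (Q x)^2 := by
  have hterm : ∀ j : Fin N, Integrable (fun x : Es N => x j * pd j Q x * Q x) := fun j =>
    int_congr' (mulint (cm j (pd j Q)) Q.continuous (bddS Q))
      (fun x => by rw [cm_apply]; ring)
  have hsplit : ∀ x : Es N, LamS p Q x * Q x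
      = 2/(p-1) * (Q x * Q x) + ∑ j : Fin N, x j * pd j Q x * Q x := by
    intro x
    rw [LamS_apply, scalingGen, add_mul, Finset.sum_mul]
    simp only [pd_apply]
    ring
  rw [ieq hsplit, integral_add ((mulintS Q Q).const_mul _) (integrable_finset_sum _
    (fun j _ => hterm j)), integral_const_mul, integral_finset_sum _ (fun j _ => hterm j)]
  rw [Finset.sum_congr rfl (fun j (_ : j ∈ Finset.univ) => int_xQ2 Q hQpos j)]
  rw [Finset.sum_const, Finset.card_univ, Fintype.card_fin, nsmul_eq_mul]
  rw [ieq (f := fun x : Es N => Q x * Q x) (g := fun x : Es N => (Q x)^2)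
    (fun x => (pow_two (Q x)).symm)]
  ring

include hp hQpos in
lemma int_LamQp :
    ∫ x : Es N, LamS p Q x * Q x ^ p
      = (2/(p-1) - N/(p+1)) * ∫ x : Es N, Q x ^ (p+1) := by
  have hcont : Continuous (fun x : Es N => Q x ^ p) := Qr_cont Q hQpos p
  have hbdd := Qr_bdd Q hQpos p (by linarith)
  have hterm : ∀ j : Fin N, Integrable (fun x : Es N => x j * pd j Q x * Q x ^ p) := fun j =>
    int_congr' (mulint (cm j (pd j Q)) hcont hbdd)
      (fun x => by rw [cm_apply]; ring)
  have hsplit : ∀ x : Es N, LamS p Q x * Q x ^ p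
      = 2/(p-1) * (Q x ^ (p+1)) + ∑ j : Fin N, x j * pd j Q x * Q x ^ p := by
    intro x
    rw [LamS_apply, scalingGen, add_mul, Finset.sum_mul, ← hQQp1 Q hQpos x]
    simp only [pd_apply]
    ring
  rw [ieq hsplit, integral_add ((int_Qr Q hQpos (p+1) (by linarith)).const_mul _)
    (integrable_finset_sum _ (fun j _ => hterm j)), integral_const_mul,
    integral_finset_sum _ (fun j _ => hterm j)]
  rw [Finset.sum_congr rfl (fun j (_ : j ∈ Finset.univ) => int_xQp1 hp Q hQpos j)]
  rw [Finset.sum_const, Finset.card_univ, Fintype.card_fin, nsmul_eq_mul]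
  ring

include hQpos in
lemma M_pos : 0 < ∫ x : Es N, (Q x)^2 := by
  rw [integral_pos_iff_support_of_nonneg_ae
    (Filter.Eventually.of_forall (fun x => sq_nonneg (Q x)))
    (int_congr' (mulintS Q Q) (fun x => (pow_two (Q x)).symm))]
  have hsupp : Function.support (fun x : Es N => (Q x)^2) = Set.univ := by
    ext x
    simp only [Function.mem_support, Set.mem_univ, iff_true]
    exact pow_ne_zero 2 (hQpos x).ne'
  rw [hsupp]
  exact isOpen_univ.measure_pos volume ⟨0, trivial⟩

include hp hQpos in
lemma P_pos : 0 < ∫ x : Es N, Q x ^ (p+1) := by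
  rw [integral_pos_iff_support_of_nonneg_ae
    (Filter.Eventually.of_forall (fun x => (Real.rpow_pos_of_pos (hQpos x) (p+1)).le))
    (int_Qr Q hQpos (p+1) (by linarith))]
  have hsupp : Function.support (fun x : Es N => Q x ^ (p+1)) = Set.univ := by
    ext x
    simp only [Function.mem_support, Set.mem_univ, iff_true]
    exact (Real.rpow_pos_of_pos (hQpos x) (p+1)).ne'
  rw [hsupp]
  exact isOpen_univ.measure_pos volume ⟨0, trivial⟩

include hp hQpos in
lemma kappa_eq :
    (∫ x : Es N, scalingGen p (⇑Q) x * Q x) / (∫ x : Es N, (Q x)^2)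
      = 2/(p-1) - (N:ℝ)/2 := by
  have h1 : ∫ x : Es N, scalingGen p (⇑Q) x * Q x
      = (2/(p-1) - (N:ℝ)/2) * ∫ x : Es N, (Q x)^2 := by
    rw [← int_LamQ Q hQpos]
    exact ieq fun x => by rw [LamS_apply]
  rw [h1, mul_div_assoc, div_self (M_pos Q hQpos).ne', mul_one]

end INT2
section MAIN
variable {p : ℝ} (hp : 1 < p) (Q : 𝓢(Es N, ℝ)) (hQpos : ∀ x, 0 < Q x)
  (hQeq : ∀ x, lap (⇑Q) x - Q x + Q x ^ p = 0)

include hQpos in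
lemma int_ZQ (κ : ℝ) (hκ : κ = 2/(p-1) - (N:ℝ)/2) :
    ∫ x : Es N, ZS p κ Q x * Q x = 0 := by
  have hsplit : ∀ x : Es N, ZS p κ Q x * Q x = LamS p Q x * Q x - κ * (Q x * Q x) :=
    fun x => by rw [ZS_apply]; ring
  rw [ieq hsplit, integral_sub (mulintS (LamS p Q) Q) ((mulintS Q Q).const_mul κ),
    integral_const_mul, int_LamQ Q hQpos,
    ieq (f := fun x : Es N => Q x * Q x) (g := fun x : Es N => (Q x)^2)
      (fun x => (pow_two (Q x)).symm), hκ]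
  ring

include hp hQpos in
lemma int_ZQp (κ : ℝ) (hκ : κ = 2/(p-1) - (N:ℝ)/2) :
    ∫ x : Es N, ZS p κ Q x * Q x ^ p
      = ((N:ℝ)/2 - (N:ℝ)/(p+1)) * ∫ x : Es N, Q x ^ (p+1) := by
  have hQp : Integrable (fun x : Es N => Q x * Q x ^ p) :=
    mulint Q (Qr_cont Q hQpos p) (Qr_bdd Q hQpos p (by linarith))
  have hsplit : ∀ x : Es N, ZS p κ Q x * Q x ^ p
      = LamS p Q x * Q x ^ p - κ * (Q x * Q x ^ p) :=
    fun x => by rw [ZS_apply]; ring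
  rw [ieq hsplit, integral_sub (by
      exact mulint (LamS p Q) (Qr_cont Q hQpos p) (Qr_bdd Q hQpos p (by linarith)))
    (hQp.const_mul κ), integral_const_mul, int_LamQp hp Q hQpos,
    ieq (f := fun x : Es N => Q x * Q x ^ p) (g := fun x : Es N => Q x ^ (p+1))
      (hQQp1 Q hQpos), hκ]
  ring

include hp hQpos hQeq in
lemma QF_eq (κ : ℝ) (hκ : κ = 2/(p-1) - (N:ℝ)/2) :
    ∫ x : Es N, (‖gradient (⇑(ZS p κ Q)) x‖^2 + (ZS p κ Q x)^2
        - p * Q x ^ (p-1) * (ZS p κ Q x)^2)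
      = κ * (p-1) * (((N:ℝ)/2 - (N:ℝ)/(p+1)) * ∫ x : Es N, Q x ^ (p+1)) := by
  have hQp1cont := Qr_cont Q hQpos (p-1)
  have hQp1bdd := Qr_bdd Q hQpos (p-1) (by linarith)
  have intGrad : ∀ i : Fin N, Integrable (fun x : Es N => (pd i (ZS p κ Q) x)^2) := fun i =>
    int_congr' (mulintS (pd i (ZS p κ Q)) (pd i (ZS p κ Q))) (fun x => (pow_two _).symm)
  have intZ2 : Integrable (fun x : Es N => (ZS p κ Q x)^2) :=
    int_congr' (mulintS (ZS p κ Q) (ZS p κ Q)) (fun x => (pow_two _).symm)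
  have intC : Integrable (fun x : Es N => p * Q x ^ (p-1) * (ZS p κ Q x)^2) := by
    obtain ⟨C1, hC1⟩ := hQp1bdd
    obtain ⟨C2, hC2⟩ := bddS (ZS p κ Q)
    refine int_congr' (mulint (ZS p κ Q) (g := fun x => p * Q x ^ (p-1) * ZS p κ Q x)
      ((continuous_const.mul hQp1cont).mul (ZS p κ Q).continuous)
      ⟨|p| * C1 * C2, fun x => ?_⟩) fun x => by ring
    rw [norm_mul, norm_mul, Real.norm_eq_abs p]
    have h1 : |p| * ‖Q x ^ (p-1)‖ ≤ |p| * C1 :=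
      mul_le_mul_of_nonneg_left (hC1 x) (abs_nonneg p)
    have h2 : 0 ≤ ‖ZS p κ Q x‖ := norm_nonneg _
    have hC1nn : 0 ≤ |p| * C1 := le_trans (by positivity) h1
    calc |p| * ‖Q x ^ (p-1)‖ * ‖ZS p κ Q x‖
        ≤ |p| * C1 * ‖ZS p κ Q x‖ := mul_le_mul_of_nonneg_right h1 h2
      _ ≤ |p| * C1 * C2 := mul_le_mul_of_nonneg_left (hC2 x) hC1nn
  have intSum : Integrable (fun x : Es N => ∑ i : Fin N, (pd i (ZS p κ Q) x)^2) :=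
    integrable_finset_sum _ (fun i _ => intGrad i)
  have intSumZ2 : Integrable (fun x : Es N =>
      (∑ i : Fin N, (pd i (ZS p κ Q) x)^2) + (ZS p κ Q x)^2) := intSum.add intZ2
  have intZS2 : ∀ i : Fin N,
      Integrable (fun x : Es N => ZS p κ Q x * pd i (pd i (ZS p κ Q)) x) := fun i =>
    mulintS _ _
  have intZsum : Integrable (fun x : Es N =>
      ZS p κ Q x * ∑ i : Fin N, pd i (pd i (ZS p κ Q)) x) :=
    int_congr' (integrable_finset_sum _ (fun i _ => intZS2 i))
      (fun x => (Finset.mul_sum Finset.univ _ _).symm)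
  have intZ2sub : Integrable (fun x : Es N =>
      (ZS p κ Q x)^2 - ZS p κ Q x * ∑ i : Fin N, pd i (pd i (ZS p κ Q)) x) :=
    intZ2.sub intZsum
  have intZQ := mulintS (ZS p κ Q) Q
  have intZQp : Integrable (fun x : Es N => ZS p κ Q x * Q x ^ p) :=
    mulint _ (Qr_cont Q hQpos p) (Qr_bdd Q hQpos p (by linarith))
  have intA : Integrable (fun x : Es N => -2 * (ZS p κ Q x * Q x)) := intZQ.const_mul _
  have intB : Integrable (fun x : Es N => κ * (p-1) * (ZS p κ Q x * Q x ^ p)) :=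
    intZQp.const_mul _
  -- Step 1: split the integral
  have hpoint : ∀ x : Es N, ‖gradient (⇑(ZS p κ Q)) x‖^2 + (ZS p κ Q x)^2
      - p * Q x ^ (p-1) * (ZS p κ Q x)^2
      = (∑ i : Fin N, (pd i (ZS p κ Q) x)^2) + (ZS p κ Q x)^2
        - p * Q x ^ (p-1) * (ZS p κ Q x)^2 := fun x => by
    rw [grad_norm_sq]; rfl
  have e1 : ∫ x : Es N, (‖gradient (⇑(ZS p κ Q)) x‖^2 + (ZS p κ Q x)^2
      - p * Q x ^ (p-1) * (ZS p κ Q x)^2)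
      = (∑ i : Fin N, ∫ x : Es N, (pd i (ZS p κ Q) x)^2)
        + (∫ x : Es N, (ZS p κ Q x)^2)
        - ∫ x : Es N, p * Q x ^ (p-1) * (ZS p κ Q x)^2 := by
    rw [ieq hpoint, integral_sub intSumZ2 intC, integral_add intSum intZ2,
      integral_finset_sum _ (fun i _ => intGrad i)]
  -- Step 2: integration by parts
  have e2 : (∑ i : Fin N, ∫ x : Es N, (pd i (ZS p κ Q) x)^2)
      = -∫ x : Es N, ZS p κ Q x * ∑ i : Fin N, pd i (pd i (ZS p κ Q)) x := by
    calc ∑ i : Fin N, ∫ x : Es N, (pd i (ZS p κ Q) x)^2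
        = ∑ i : Fin N, -∫ x : Es N, ZS p κ Q x * pd i (pd i (ZS p κ Q)) x :=
          Finset.sum_congr rfl (fun i _ => ibp_self (ZS p κ Q) i)
      _ = -∑ i : Fin N, ∫ x : Es N, ZS p κ Q x * pd i (pd i (ZS p κ Q)) x :=
          Finset.sum_neg_distrib _
      _ = -∫ x : Es N, ∑ i : Fin N, ZS p κ Q x * pd i (pd i (ZS p κ Q)) x := by
          rw [integral_finset_sum _ (fun i _ => intZS2 i)]
      _ = -∫ x : Es N, ZS p κ Q x * ∑ i : Fin N, pd i (pd i (ZS p κ Q)) x := by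
          rw [ieq (f := fun x : Es N =>
            ∑ i : Fin N, ZS p κ Q x * pd i (pd i (ZS p κ Q)) x)
            (g := fun x : Es N => ZS p κ Q x * ∑ i : Fin N, pd i (pd i (ZS p κ Q)) x)
            (fun x => (Finset.mul_sum Finset.univ _ _).symm)]
  -- Step 3: combine into a single integral
  have e3 : ∫ x : Es N, ZS p κ Q x * (ZS p κ Q x
        - (∑ i : Fin N, pd i (pd i (ZS p κ Q)) x) - p * Q x ^ (p-1) * ZS p κ Q x)
      = (∫ x : Es N, (ZS p κ Q x)^2)
        - (∫ x : Es N, ZS p κ Q x * ∑ i : Fin N, pd i (pd i (ZS p κ Q)) x)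
        - ∫ x : Es N, p * Q x ^ (p-1) * (ZS p κ Q x)^2 := by
    rw [ieq (g := fun x : Es N => ((ZS p κ Q x)^2
      - ZS p κ Q x * (∑ i : Fin N, pd i (pd i (ZS p κ Q)) x))
      - p * Q x ^ (p-1) * (ZS p κ Q x)^2) (fun x => by ring)]
    rw [integral_sub intZ2sub intC, integral_sub intZ2 intZsum]
  -- Step 4: pointwise identity for the linearized operator
  have e4 : ∫ x : Es N, ZS p κ Q x * (ZS p κ Q x
        - (∑ i : Fin N, pd i (pd i (ZS p κ Q)) x) - p * Q x ^ (p-1) * ZS p κ Q x)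
      = -2 * (∫ x : Es N, ZS p κ Q x * Q x)
        + κ * (p-1) * ∫ x : Es N, ZS p κ Q x * Q x ^ p := by
    rw [ieq (g := fun x : Es N => -2 * (ZS p κ Q x * Q x)
      + κ * (p-1) * (ZS p κ Q x * Q x ^ p)) (fun x => by
        rw [Lplus_Z hp Q hQpos hQeq κ x]; ring)]
    rw [integral_add intA intB, integral_const_mul, integral_const_mul]
  have h5 := int_ZQ Q hQpos κ hκ
  have h6 := int_ZQp hp Q hQpos κ hκ
  rw [h5, h6] at e4
  rw [e1, e2]
  linarith [e3, e4]
end MAIN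
end LplusAux

/-- Negative direction for the linearized operator `L₊ = 1 - Δ - pQ^(p-1)` on `{Q}^⊥`:
with `Z` the component of `ΛQ` orthogonal to `Q` in `L²`, one has
`(L₊Z, Z) = -(N²(p-1)/(4(p+1)))(p - (1 + 4/N)) ∫ Q^(p+1)`, which is negative for
`p > 1 + 4/N`. -/
theorem Lplus_negative_direction (N : ℕ) (hN : 1 ≤ N) (p : ℝ) (hp : 1 < p)
    (Q : SchwartzMap (EuclideanSpace ℝ (Fin N)) ℝ)
    (hQpos : ∀ x, 0 < Q x)
    (hQne : ∃ x, Q x ≠ 0)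
    (hQ : ∀ x, lap (⇑Q) x - Q x + Q x ^ p = 0) :
    let Λ : EuclideanSpace ℝ (Fin N) → ℝ := scalingGen p (⇑Q)
    let κ : ℝ := (∫ x, Λ x * Q x) / (∫ x, (Q x) ^ 2)
    let Z : EuclideanSpace ℝ (Fin N) → ℝ := fun x => Λ x - κ * Q x
    (∫ x, (‖gradient Z x‖ ^ 2 + (Z x) ^ 2 - p * Q x ^ (p - 1) * (Z x) ^ 2))
        = -((N : ℝ) ^ 2 * (p - 1) / (4 * (p + 1))) * (p - (1 + 4 / (N : ℝ)))
          * ∫ x, Q x ^ (p + 1)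
      ∧ (1 + 4 / (N : ℝ) < p →
        (∫ x, (‖gradient Z x‖ ^ 2 + (Z x) ^ 2 - p * Q x ^ (p - 1) * (Z x) ^ 2)) < 0) := by
  intro Λ κ Z
  have hp1 : p - 1 ≠ 0 := by linarith
  have hp2 : p + 1 ≠ 0 := by linarith
  have hNpos : (0:ℝ) < (N:ℝ) := by exact_mod_cast hN
  have hNne : (N:ℝ) ≠ 0 := hNpos.ne'
  have hκval : κ = 2/(p-1) - (N:ℝ)/2 := by
    show (∫ x, Λ x * Q x) / (∫ x, (Q x) ^ 2) = _
    exact LplusAux.kappa_eq hp Q hQpos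
  have hZ : Z = ⇑(LplusAux.ZS p κ Q) := by
    funext x
    show Λ x - κ * Q x = _
    rw [LplusAux.ZS_apply, LplusAux.LamS_apply]
  have hmain := LplusAux.QF_eq hp Q hQpos hQ κ hκval
  have hcoef : κ * (p-1) * ((N:ℝ)/2 - (N:ℝ)/(p+1))
      = -((N : ℝ) ^ 2 * (p - 1) / (4 * (p + 1))) * (p - (1 + 4 / (N : ℝ))) := by
    rw [hκval]
    field_simp
    ring
  have heq : (∫ x, (‖gradient Z x‖ ^ 2 + (Z x) ^ 2 - p * Q x ^ (p - 1) * (Z x) ^ 2))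
      = -((N : ℝ) ^ 2 * (p - 1) / (4 * (p + 1))) * (p - (1 + 4 / (N : ℝ)))
        * ∫ x, Q x ^ (p + 1) := by
    rw [hZ, hmain, ← mul_assoc, hcoef]
  refine ⟨heq, fun hs => ?_⟩
  rw [heq]
  have hX : 0 < (N : ℝ) ^ 2 * (p - 1) / (4 * (p + 1)) :=
    div_pos (mul_pos (pow_pos hNpos 2) (by linarith)) (by linarith)
  have hY : 0 < p - (1 + 4 / (N : ℝ)) := by linarith
  have hP : 0 < ∫ x : EuclideanSpace ℝ (Fin N), Q x ^ (p + 1) :=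
    LplusAux.P_pos hp Q hQpos
  have hprod : 0 < ((N : ℝ) ^ 2 * (p - 1) / (4 * (p + 1))) * (p - (1 + 4 / (N : ℝ)))
      * ∫ x : EuclideanSpace ℝ (Fin N), Q x ^ (p + 1) := mul_pos (mul_pos hX hY) hP
  linarith [hprod]
end
end

section
/- Let F : [0,∞) → ℝ be twice continuously differentiable and suppose that F(t) ≥ 0 and F''(t) < 0 for all t ≥ 0, and that there is a constant K > 0 with F'(t)² ≤ K² F(t) F''(t)² for all t ≥ 0. Then F'(t) > 0 for all t ≥ 0, and there exist constants C > 0 and c > 0 such that F'(t) ≤ C e^{−ct} for all t ≥ 0; consequently ∫_t^∞ (−F''(s)) ds ≤ C e^{−ct} for all t ≥ 0. -/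
open MeasureTheory

private lemma antitoneOn_of_hasDerivAt_nonpos {a : ℝ} {H H' : ℝ → ℝ}
    (hd : ∀ x ∈ Set.Ici a, HasDerivAt H (H' x) x)
    (hle : ∀ x ∈ Set.Ici a, H' x ≤ 0) : AntitoneOn H (Set.Ici a) := by
  apply antitoneOn_of_deriv_nonpos (convex_Ici a)
  · exact fun x hx => (hd x hx).continuousAt.continuousWithinAt
  · intro x hx
    rw [interior_Ici] at hx
    exact (hd x (Set.Ioi_subset_Ici_self hx)).differentiableAt.differentiableWithinAt
  · intro x hx
    rw [interior_Ici] at hx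
    rw [(hd x (Set.Ioi_subset_Ici_self hx)).deriv]
    exact hle x (Set.Ioi_subset_Ici_self hx)

/-- **ODE/virial argument**: if `F ≥ 0`, `F'' < 0` and `(F')² ≤ K² F (F'')²` on `[0,∞)`,
then `F' > 0` on `[0,∞)` and `F'` decays exponentially; consequently
`∫ₜ^∞ (-F'') ≤ C e^(-ct)`. -/
theorem virial_ode_argument (F : ℝ → ℝ) (hF : ContDiff ℝ 2 F)
    (hFpos : ∀ t ≥ (0 : ℝ), 0 ≤ F t)
    (hFconc : ∀ t ≥ (0 : ℝ), deriv (deriv F) t < 0)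
    (K : ℝ) (hK : 0 < K)
    (hCS : ∀ t ≥ (0 : ℝ), (deriv F t) ^ 2 ≤ K ^ 2 * F t * (deriv (deriv F) t) ^ 2) :
    (∀ t ≥ (0 : ℝ), 0 < deriv F t) ∧
    ∃ C > (0 : ℝ), ∃ c > (0 : ℝ),
      (∀ t ≥ (0 : ℝ), deriv F t ≤ C * Real.exp (-c * t)) ∧
      (∀ t ≥ (0 : ℝ), (∫ s in Set.Ioi t, (-(deriv (deriv F) s))) ≤ C * Real.exp (-c * t)) := by
  set f := deriv F with hfdef
  set g := deriv f with hgdef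
  -- regularity
  have hf1 : ContDiff ℝ 1 f := by
    have := (contDiff_succ_iff_deriv (n := 1)).mp (by exact_mod_cast hF)
    exact this.2.2
  have hfdiff : Differentiable ℝ f := hf1.differentiable one_ne_zero
  have hFd : ∀ x : ℝ, HasDerivAt F (f x) x :=
    fun x => ((hF.differentiable (by norm_num)) x).hasDerivAt
  have hfd : ∀ x : ℝ, HasDerivAt f (g x) x := fun x => (hfdiff x).hasDerivAt
  -- Step 1 : f > 0 on [0,∞)
  have hfpos : ∀ t ≥ (0 : ℝ), 0 < f t := by
    intro t₀ ht₀
    by_contra h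
    push_neg at h
    have hstrict : StrictAntiOn f (Set.Ici t₀) := by
      apply strictAntiOn_of_deriv_neg (convex_Ici t₀)
        (fun x hx => (hfd x).continuousAt.continuousWithinAt)
      intro x hx
      rw [interior_Ici] at hx
      exact hFconc x (le_trans ht₀ hx.le)
    have ha : f (t₀ + 1) < 0 :=
      lt_of_lt_of_le
        (hstrict Set.self_mem_Ici (by simp : t₀ + 1 ∈ Set.Ici t₀) (by linarith)) h
    set a := f (t₀ + 1) with hadef
    have hP : AntitoneOn (fun x => F x - a * x) (Set.Ici (t₀ + 1)) := by
      apply antitoneOn_of_hasDerivAt_nonpos (H' := fun x => f x - a)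
      · intro x _
        exact ((hFd x).sub ((hasDerivAt_id' x).const_mul a)).congr_deriv (by ring)
      · intro x hx
        have : f x ≤ a := by
          rcases eq_or_lt_of_le (Set.mem_Ici.mp hx) with h' | h'
          · rw [← h']
          · exact (hstrict (by simp : t₀ + 1 ∈ Set.Ici t₀)
              (Set.mem_Ici.mpr (by linarith)) h').le
        linarith
    set q := (F (t₀ + 1) + 1) / (-a) with hq
    have hFpos1 : 0 ≤ F (t₀ + 1) := hFpos _ (by linarith)
    have hqnn : 0 ≤ q := by rw [hq]; exact div_nonneg (by linarith) (by linarith)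
    have hx₁ge : t₀ + 1 ≤ t₀ + 1 + q := by linarith
    have key := hP Set.self_mem_Ici (Set.mem_Ici.mpr hx₁ge) hx₁ge
    have hFx₁ : 0 ≤ F (t₀ + 1 + q) := hFpos _ (by linarith)
    have hna : (-a) ≠ 0 := ne_of_gt (by linarith)
    have hdiv : a * q = -(F (t₀ + 1) + 1) := by
      have h5 : (-a) * q = F (t₀ + 1) + 1 := by
        rw [hq, mul_comm, div_mul_cancel₀ _ hna]
      linarith
    simp only at key
    nlinarith [key, hFx₁, hdiv]
  -- F > 0 on [0,∞)
  have hF0 : 0 < F 0 := by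
    rcases (hFpos 0 le_rfl).lt_or_eq with h | h
    · exact h
    · exfalso
      have := hCS 0 le_rfl
      rw [← h] at this
      nlinarith [hfpos 0 le_rfl]
  have hFpos' : ∀ t ≥ (0 : ℝ), 0 < F t := by
    intro t ht
    have hmono : MonotoneOn F (Set.Ici (0:ℝ)) := by
      apply monotoneOn_of_deriv_nonneg (convex_Ici 0)
        (fun x _ => (hFd x).continuousAt.continuousWithinAt)
        (fun x hx => (hFd x).differentiableAt.differentiableWithinAt)
      intro x hx
      rw [interior_Ici] at hx
      rw [(hFd x).deriv]
      exact (hfpos x hx.le).le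
    exact lt_of_lt_of_le hF0 (hmono Set.self_mem_Ici (Set.mem_Ici.mpr ht) ht)
  -- key pointwise inequality : f t ≤ K * sqrt (F t) * (-g t)
  have hkey : ∀ t ≥ (0:ℝ), f t ≤ K * Real.sqrt (F t) * (-(g t)) := by
    intro t ht
    have hs : Real.sqrt (F t) ^ 2 = F t := Real.sq_sqrt (hFpos t ht)
    have h1 : f t ^ 2 ≤ (K * Real.sqrt (F t) * (-(g t))) ^ 2 := by
      have heq : (K * Real.sqrt (F t) * (-(g t))) ^ 2 = K ^ 2 * F t * (g t) ^ 2 := by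
        rw [mul_pow, mul_pow, hs]; ring
      rw [heq]; exact hCS t ht
    have h2 : 0 ≤ K * Real.sqrt (F t) * (-(g t)) :=
      mul_nonneg (mul_nonneg hK.le (Real.sqrt_nonneg _)) (by linarith [hFconc t ht])
    nlinarith [hfpos t ht, h1, h2]
  -- Step 3 : sqrt (F t) bounded by M
  set M := Real.sqrt (F 0) + K / 2 * f 0 with hM
  have hMpos : 0 < M := by
    have hf0 := hfpos 0 le_rfl
    have h2 : 0 < K / 2 * f 0 := by positivity
    have h0 : 0 ≤ Real.sqrt (F 0) := Real.sqrt_nonneg _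
    rw [hM]; linarith
  have hsqrtle : ∀ t ≥ (0:ℝ), Real.sqrt (F t) ≤ M := by
    intro t ht
    have hH : AntitoneOn (fun x => Real.sqrt (F x) + K / 2 * f x) (Set.Ici (0:ℝ)) := by
      apply antitoneOn_of_hasDerivAt_nonpos
        (H' := fun x => f x / (2 * Real.sqrt (F x)) + K / 2 * g x)
      · intro x hx
        exact ((hFd x).sqrt (ne_of_gt (hFpos' x hx))).add ((hfd x).const_mul (K / 2))
      · intro x hx
        have hsx : 0 < Real.sqrt (F x) := Real.sqrt_pos.mpr (hFpos' x hx)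
        have h1 : f x / (2 * Real.sqrt (F x)) ≤ K / 2 * (-(g x)) := by
          rw [div_le_iff₀ (by positivity)]
          nlinarith [hkey x hx]
        linarith
    have hle := hH Set.self_mem_Ici (Set.mem_Ici.mpr ht) ht
    have hft : 0 < f t := hfpos t ht
    simp only at hle
    rw [hM]
    nlinarith
  -- Step 4 : exponential decay of f
  set c := 1 / (K * M) with hc
  have hcpos : 0 < c := by rw [hc]; positivity
  have hKM : 0 < K * M := by positivity
  have hcKM : c * (K * M) = 1 := by rw [hc]; field_simp
  have hgle : ∀ t ≥ (0:ℝ), g t + c * f t ≤ 0 := by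
    intro t ht
    have h1 := hkey t ht
    have hgneg := hFconc t ht
    have h2 : K * Real.sqrt (F t) * (-(g t)) ≤ K * M * (-(g t)) :=
      mul_le_mul_of_nonneg_right
        (mul_le_mul_of_nonneg_left (hsqrtle t ht) hK.le) (by linarith)
    have h3 : f t ≤ K * M * (-(g t)) := le_trans h1 h2
    have h4 : c * (K * M * (-(g t))) = -(g t) := by
      rw [← mul_assoc, hcKM]; ring
    have h5 := mul_le_mul_of_nonneg_left h3 hcpos.le
    linarith
  have hdecay : ∀ t ≥ (0:ℝ), f t ≤ f 0 * Real.exp (-c * t) := by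
    intro t ht
    have hφ : AntitoneOn (fun x => f x * Real.exp (c * x)) (Set.Ici (0:ℝ)) := by
      apply antitoneOn_of_hasDerivAt_nonpos
        (H' := fun x => g x * Real.exp (c * x) + f x * (Real.exp (c * x) * c))
      · intro x _
        have h1 : HasDerivAt (fun y => c * y) c x := by
          simpa using (hasDerivAt_id x).const_mul c
        exact (hfd x).mul h1.exp
      · intro x hx
        have := hgle x hx
        have he : 0 < Real.exp (c * x) := Real.exp_pos _
        nlinarith
    have hφle := hφ Set.self_mem_Ici (Set.mem_Ici.mpr ht) ht
    simp only [mul_zero, Real.exp_zero, mul_one] at hφle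
    have he : 0 < Real.exp (c * t) := Real.exp_pos _
    rw [neg_mul, Real.exp_neg, mul_comm, inv_mul_eq_div, le_div_iff₀ he]
    linarith
  have hf0 : 0 < f 0 := hfpos 0 le_rfl
  -- f tends to 0 at infinity
  have hub : Filter.Tendsto (fun t => f 0 * Real.exp (-c * t)) Filter.atTop (nhds 0) := by
    have h1 : Filter.Tendsto (fun t : ℝ => c * t) Filter.atTop Filter.atTop :=
      Filter.Tendsto.const_mul_atTop hcpos Filter.tendsto_id
    have h2 := Real.tendsto_exp_neg_atTop_nhds_zero.comp h1
    have h3 := h2.const_mul (f 0)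
    simpa [Function.comp, neg_mul] using h3
  have htendf : Filter.Tendsto f Filter.atTop (nhds 0) := by
    apply tendsto_of_tendsto_of_tendsto_of_le_of_le' tendsto_const_nhds hub
    · filter_upwards [Filter.eventually_ge_atTop (0:ℝ)] with t ht
      exact (hfpos t ht).le
    · filter_upwards [Filter.eventually_ge_atTop (0:ℝ)] with t ht
      exact hdecay t ht
  refine ⟨hfpos, f 0, hf0, c, hcpos, hdecay, ?_⟩
  intro t ht
  have hint : (∫ s in Set.Ioi t, -(g s)) = 0 - (-(f t)) := by
    apply integral_Ioi_of_hasDerivAt_of_nonneg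
      (g := fun x => -f x) (g' := fun x => -g x)
    · exact ((hfd t).continuousAt.neg).continuousWithinAt
    · exact fun x _ => (hfd x).neg
    · intro x hx
      have := hFconc x (le_trans ht (le_of_lt hx))
      linarith
    · simpa using htendf.neg
  rw [hint]
  simpa using hdecay t ht
end

section
/- Let 1 < p ≤ 2. There exists a constant C > 0, depending only on p, such that for every real number w ≥ 0 and every h ∈ ℂ, | |w+h|^{p−1}(w+h) − w^p − ((p+1)/2) w^{p−1} h − ((p−1)/2) w^{p−1} \overline{h} | ≤ C |h|^p. -/
open Real
open scoped NNReal

lemma aux_add_rpow {a b p : ℝ} (ha : 0 ≤ a) (hb : 0 ≤ b) (hp : 0 ≤ p) (hp1 : p ≤ 1) :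
    (a + b) ^ p ≤ a ^ p + b ^ p := by
  have := NNReal.rpow_add_le_add_rpow (a.toNNReal) (b.toNNReal) hp hp1
  have h2 : ((a.toNNReal + b.toNNReal : ℝ≥0) : ℝ) = a + b := by
    simp [Real.coe_toNNReal a ha, Real.coe_toNNReal b hb]
  calc (a + b) ^ p = (((a.toNNReal + b.toNNReal : ℝ≥0) : ℝ)) ^ p := by rw [h2]
    _ = (((a.toNNReal + b.toNNReal) ^ p : ℝ≥0) : ℝ) := by rw [← NNReal.coe_rpow]
    _ ≤ (((a.toNNReal ^ p + b.toNNReal ^ p : ℝ≥0)) : ℝ) := by exact_mod_cast this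
    _ = a ^ p + b ^ p := by
        push_cast
        rw [Real.coe_toNNReal a ha, Real.coe_toNNReal b hb]

lemma aux_holder {x y α : ℝ} (h0 : 0 ≤ α) (h1 : α ≤ 1) (hx : 0 ≤ x) (hy : 0 ≤ y) :
    |x ^ α - y ^ α| ≤ |x - y| ^ α := by
  have key : ∀ u v : ℝ, 0 ≤ u → 0 ≤ v → v ≤ u → u ^ α - v ^ α ≤ (u - v) ^ α := by
    intro u v hu hv huv
    have := aux_add_rpow (a := u - v) (b := v) (by linarith) hv h0 h1
    rw [sub_add_cancel] at this
    linarith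
  rcases le_total y x with hxy | hxy
  · rw [abs_of_nonneg (by linarith : (0:ℝ) ≤ x - y), abs_of_nonneg
      (sub_nonneg.2 (Real.rpow_le_rpow hy hxy h0))]
    exact key x y hx hy hxy
  · rw [abs_of_nonpos (by linarith : x - y ≤ 0), abs_of_nonpos
      (sub_nonpos.2 (Real.rpow_le_rpow hx hxy h0)), neg_sub, neg_sub]
    exact key y x hy hx hxy

lemma aux_tangent_concave {s r α : ℝ} (hs : 0 < s) (hsr : s ≤ r) (h0 : 0 ≤ α) (h1 : α ≤ 1) :
    r ^ α - s ^ α ≤ α * s ^ (α - 1) * (r - s) := by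
  have ht : (-1 : ℝ) ≤ r / s - 1 := by
    have : 0 ≤ r / s := div_nonneg (by linarith) hs.le
    linarith
  have hB := rpow_one_add_le_one_add_mul_self ht h0 h1
  rw [add_sub_cancel] at hB
  have hr : r = s * (r / s) := by field_simp
  have hrpow : r ^ α = s ^ α * (r / s) ^ α := by
    rw [hr, Real.mul_rpow hs.le (div_nonneg (by linarith) hs.le)]
    congr 1
    rw [← hr]
  have hspow : 0 < s ^ α := Real.rpow_pos_of_pos hs α
  have hsm1 : s ^ (α - 1) = s ^ α / s := by
    rw [Real.rpow_sub hs, Real.rpow_one]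
  rw [hrpow, hsm1]
  calc s ^ α * (r / s) ^ α - s ^ α ≤ s ^ α * (1 + α * (r / s - 1)) - s ^ α := by
        nlinarith
    _ = α * (s ^ α / s) * (r - s) := by field_simp; ring

lemma aux_tangent_convex {w s p : ℝ} (hw : 0 < w) (hs : 0 ≤ s) (hp : 1 ≤ p) :
    w ^ p + p * w ^ (p - 1) * (s - w) ≤ s ^ p := by
  have ht : (-1 : ℝ) ≤ s / w - 1 := by
    have : 0 ≤ s / w := div_nonneg hs hw.le
    linarith
  have hB := one_add_mul_self_le_rpow_one_add ht hp
  rw [add_sub_cancel] at hB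
  have hspow : s ^ p = w ^ p * (s / w) ^ p := by
    rw [← Real.mul_rpow hw.le (div_nonneg hs hw.le)]
    congr 1
    field_simp
  have hwm1 : w ^ (p - 1) = w ^ p / w := by
    rw [Real.rpow_sub hw, Real.rpow_one]
  have hwpow : 0 < w ^ p := Real.rpow_pos_of_pos hw p
  rw [hspow, hwm1]
  calc w ^ p + p * (w ^ p / w) * (s - w) = w ^ p * (1 + p * (s / w - 1)) := by
        field_simp
    _ ≤ w ^ p * (s / w) ^ p := by nlinarith

lemma aux_taylor {w s p : ℝ} (hw : 0 < w) (hs : 0 < s) (hp : 1 ≤ p) (hp2 : p ≤ 2) :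
    |s ^ p - w ^ p - p * w ^ (p - 1) * (s - w)| ≤ p * |s - w| ^ p := by
  have hlow := aux_tangent_convex hw hs.le hp
  have hup := aux_tangent_convex hs hw.le hp
  have h1 : (s - w) * (s ^ (p - 1) - w ^ (p - 1)) ≤ |s - w| * |s ^ (p - 1) - w ^ (p - 1)| := by
    calc (s - w) * (s ^ (p - 1) - w ^ (p - 1)) ≤ |(s - w) * (s ^ (p - 1) - w ^ (p - 1))| :=
          le_abs_self _
      _ = |s - w| * |s ^ (p - 1) - w ^ (p - 1)| := abs_mul _ _
  have h2 : |s ^ (p - 1) - w ^ (p - 1)| ≤ |s - w| ^ (p - 1) :=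
    aux_holder (by linarith) (by linarith) hs.le hw.le
  have h3 : |s - w| * |s - w| ^ (p - 1) = |s - w| ^ p := by
    have h := Real.rpow_add' (abs_nonneg (s - w)) (y := 1) (z := p - 1)
      (by intro hc; linarith)
    rw [show (1:ℝ) + (p - 1) = p by ring] at h
    rw [h, Real.rpow_one]
  have h4 : |s - w| * |s ^ (p - 1) - w ^ (p - 1)| ≤ |s - w| * |s - w| ^ (p - 1) :=
    mul_le_mul_of_nonneg_left h2 (abs_nonneg _)
  have hmul : p * ((s - w) * (s ^ (p - 1) - w ^ (p - 1))) ≤ p * |s - w| ^ p := by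
    rw [← h3]
    have hp0 : (0:ℝ) ≤ p := by linarith
    exact mul_le_mul_of_nonneg_left (h1.trans h4) hp0
  rw [abs_of_nonneg (by linarith : (0:ℝ) ≤ s ^ p - w ^ p - p * w ^ (p - 1) * (s - w))]
  nlinarith

/-- **`p`-th power remainder bound for the linearization of the focusing nonlinearity**
around a nonnegative real value `w`, in the low-power regime `1 < p ≤ 2`:
`| |w+h|^(p-1)(w+h) - w^p - ((p+1)/2) w^(p-1) h - ((p-1)/2) w^(p-1) h̄ | ≤ C |h|^p`. -/
theorem remainder_p_power_bound (p : ℝ) (hp1 : 1 < p) (hp2 : p ≤ 2) :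
    ∃ C > (0 : ℝ), ∀ w : ℝ, 0 ≤ w → ∀ h : ℂ,
      ‖((‖(w : ℂ) + h‖ ^ (p - 1) : ℝ) : ℂ) * ((w : ℂ) + h) - ((w ^ p : ℝ) : ℂ)
          - (((p + 1) / 2 : ℝ) : ℂ) * ((w ^ (p - 1) : ℝ) : ℂ) * h
          - (((p - 1) / 2 : ℝ) : ℂ) * ((w ^ (p - 1) : ℝ) : ℂ) * (starRingEnd ℂ) h‖
        ≤ C * ‖h‖ ^ p := by
  refine ⟨17, by norm_num, ?_⟩
  intro w hw h
  have hp0 : (0:ℝ) < p := by linarith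
  set r : ℝ := ‖(w : ℂ) + h‖ with hrdef
  set E : ℂ := ((r ^ (p - 1) : ℝ) : ℂ) * ((w : ℂ) + h) - ((w ^ p : ℝ) : ℂ)
      - (((p + 1) / 2 : ℝ) : ℂ) * ((w ^ (p - 1) : ℝ) : ℂ) * h
      - (((p - 1) / 2 : ℝ) : ℂ) * ((w ^ (p - 1) : ℝ) : ℂ) * (starRingEnd ℂ) h with hEdef
  clear_value r E
  have hr0 : (0:ℝ) ≤ r := by rw [hrdef]; exact norm_nonneg _
  have hwnorm : ‖(w : ℂ)‖ = w := by
    rw [Complex.norm_real, Real.norm_of_nonneg hw]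
  have hrw : |r - w| ≤ ‖h‖ := by
    rw [hrdef]
    calc |‖(w : ℂ) + h‖ - w| = |‖(w : ℂ) + h‖ - ‖(w : ℂ)‖| := by rw [hwnorm]
      _ ≤ ‖((w : ℂ) + h) - (w : ℂ)‖ := abs_norm_sub_norm_le _ _
      _ = ‖h‖ := by ring_nf
  have hre : E.re = r ^ (p - 1) * (w + h.re) - w ^ p - p * w ^ (p - 1) * h.re := by
    simp [hEdef, Complex.mul_re, Complex.mul_im]
    ring
  have him : E.im = r ^ (p - 1) * h.im - w ^ (p - 1) * h.im := by
    simp [hEdef, Complex.mul_re, Complex.mul_im]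
    ring
  have ha : |h.re| ≤ ‖h‖ := Complex.abs_re_le_norm h
  have hb : |h.im| ≤ ‖h‖ := Complex.abs_im_le_norm h
  by_cases hh0 : h = 0
  · subst hh0
    have hr_eq : r = w := by rw [hrdef, add_zero, hwnorm]
    have hkey : w ^ (p - 1) * w = w ^ p := by
      have h := Real.rpow_add' hw (y := p - 1) (z := 1) (by intro hc; linarith)
      rw [show p - 1 + 1 = p by ring] at h
      rw [h, Real.rpow_one]
    have hE0 : E = 0 := by
      rw [hEdef, hr_eq]
      simp only [map_zero, mul_zero, sub_zero, add_zero]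
      rw [← hkey]
      push_cast
      ring
    rw [hE0]
    simp [Real.zero_rpow (ne_of_gt hp0)]
  · have hhp : (0:ℝ) < ‖h‖ := norm_pos_iff.mpr hh0
    have hnp : ‖h‖ ^ (p - 1) * ‖h‖ = ‖h‖ ^ p := by
      have h' := Real.rpow_add' hhp.le (y := p - 1) (z := 1) (by intro hc; linarith)
      rw [show p - 1 + 1 = p by ring] at h'
      rw [h', Real.rpow_one]
    have hhp_pos : (0:ℝ) < ‖h‖ ^ p := Real.rpow_pos_of_pos hhp p
    have habs : ‖E‖ ≤ |E.re| + |E.im| := Complex.norm_le_abs_re_add_abs_im E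
    rcases le_total w (2 * ‖h‖) with hcase | hcase
    · -- far regime : w ≤ 2‖h‖, bound term by term
      have hrr : r ^ (p - 1) * r = r ^ p := by
        have h' := Real.rpow_add' hr0 (y := p - 1) (z := 1) (by intro hc; linarith)
        rw [show p - 1 + 1 = p by ring] at h'
        rw [h', Real.rpow_one]
      have hrle : r ≤ 3 * ‖h‖ := by
        rw [hrdef]
        calc ‖(w : ℂ) + h‖ ≤ ‖(w : ℂ)‖ + ‖h‖ := norm_add_le _ _
          _ = w + ‖h‖ := by rw [hwnorm]
          _ ≤ 3 * ‖h‖ := by linarith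
      have h3p : (3:ℝ) ^ p ≤ 9 := by
        calc (3:ℝ) ^ p ≤ (3:ℝ) ^ (2:ℝ) := Real.rpow_le_rpow_of_exponent_le (by norm_num) hp2
          _ = 9 := by
            rw [show (2:ℝ) = ((2:ℕ):ℝ) by norm_num, Real.rpow_natCast]; norm_num
      have h2p : (2:ℝ) ^ p ≤ 4 := by
        calc (2:ℝ) ^ p ≤ (2:ℝ) ^ (2:ℝ) := Real.rpow_le_rpow_of_exponent_le (by norm_num) hp2
          _ = 4 := by
            rw [show (2:ℝ) = ((2:ℕ):ℝ) by norm_num, Real.rpow_natCast]; norm_num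
      have h2p1 : (2:ℝ) ^ (p - 1) ≤ 2 := by
        calc (2:ℝ) ^ (p - 1) ≤ (2:ℝ) ^ (1:ℝ) :=
            Real.rpow_le_rpow_of_exponent_le (by norm_num) (by linarith)
          _ = 2 := Real.rpow_one 2
      have hrp : r ^ p ≤ 9 * ‖h‖ ^ p := by
        calc r ^ p ≤ (3 * ‖h‖) ^ p := Real.rpow_le_rpow hr0 hrle hp0.le
          _ = 3 ^ p * ‖h‖ ^ p := Real.mul_rpow (by norm_num) hhp.le
          _ ≤ 9 * ‖h‖ ^ p := by nlinarith
      have hwp : w ^ p ≤ 4 * ‖h‖ ^ p := by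
        calc w ^ p ≤ (2 * ‖h‖) ^ p := Real.rpow_le_rpow hw hcase hp0.le
          _ = 2 ^ p * ‖h‖ ^ p := Real.mul_rpow (by norm_num) hhp.le
          _ ≤ 4 * ‖h‖ ^ p := by nlinarith
      have hwp1 : w ^ (p - 1) ≤ 2 * ‖h‖ ^ (p - 1) := by
        have hp1' : (0:ℝ) ≤ p - 1 := by linarith
        calc w ^ (p - 1) ≤ (2 * ‖h‖) ^ (p - 1) := Real.rpow_le_rpow hw hcase hp1'
          _ = 2 ^ (p - 1) * ‖h‖ ^ (p - 1) := Real.mul_rpow (by norm_num) hhp.le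
          _ ≤ 2 * ‖h‖ ^ (p - 1) := by
              have := Real.rpow_nonneg hhp.le (p - 1)
              nlinarith
      have hwp1_pos : (0:ℝ) ≤ w ^ (p - 1) := Real.rpow_nonneg hw _
      have hhpm1_pos : (0:ℝ) ≤ ‖h‖ ^ (p - 1) := Real.rpow_nonneg hhp.le _
      have hnorm1 : ‖((r ^ (p - 1) : ℝ) : ℂ) * ((w : ℂ) + h)‖ ≤ 9 * ‖h‖ ^ p := by
        rw [norm_mul, Complex.norm_real, Real.norm_of_nonneg (Real.rpow_nonneg hr0 _), ← hrdef, hrr]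
        exact hrp
      have hnorm2 : ‖((w ^ p : ℝ) : ℂ)‖ ≤ 4 * ‖h‖ ^ p := by
        rw [Complex.norm_real, Real.norm_of_nonneg (Real.rpow_nonneg hw _)]
        exact hwp
      have hnorm3 : ‖(((p + 1) / 2 : ℝ) : ℂ) * ((w ^ (p - 1) : ℝ) : ℂ) * h‖ ≤ 3 * ‖h‖ ^ p := by
        rw [norm_mul, norm_mul, Complex.norm_real, Complex.norm_real,
          Real.norm_of_nonneg (by linarith : (0:ℝ) ≤ (p + 1) / 2),
          Real.norm_of_nonneg hwp1_pos]
        calc (p + 1) / 2 * w ^ (p - 1) * ‖h‖ ≤ (3 / 2) * (2 * ‖h‖ ^ (p - 1)) * ‖h‖ := by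
              apply mul_le_mul _ le_rfl hhp.le (by positivity)
              apply mul_le_mul (by linarith) hwp1 hwp1_pos (by norm_num)
          _ = 3 * (‖h‖ ^ (p - 1) * ‖h‖) := by ring
          _ = 3 * ‖h‖ ^ p := by rw [hnp]
      have hnorm4 : ‖(((p - 1) / 2 : ℝ) : ℂ) * ((w ^ (p - 1) : ℝ) : ℂ) * (starRingEnd ℂ) h‖
          ≤ ‖h‖ ^ p := by
        rw [norm_mul, norm_mul, Complex.norm_real, Complex.norm_real, RCLike.norm_conj,
          Real.norm_of_nonneg (by linarith : (0:ℝ) ≤ (p - 1) / 2),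
          Real.norm_of_nonneg hwp1_pos]
        calc (p - 1) / 2 * w ^ (p - 1) * ‖h‖ ≤ (1 / 2) * (2 * ‖h‖ ^ (p - 1)) * ‖h‖ := by
              apply mul_le_mul _ le_rfl hhp.le (by positivity)
              apply mul_le_mul (by linarith) hwp1 hwp1_pos (by norm_num)
          _ = ‖h‖ ^ (p - 1) * ‖h‖ := by ring
          _ = ‖h‖ ^ p := hnp
      calc ‖E‖ ≤ ‖((r ^ (p - 1) : ℝ) : ℂ) * ((w : ℂ) + h) - ((w ^ p : ℝ) : ℂ)
            - (((p + 1) / 2 : ℝ) : ℂ) * ((w ^ (p - 1) : ℝ) : ℂ) * h‖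
            + ‖(((p - 1) / 2 : ℝ) : ℂ) * ((w ^ (p - 1) : ℝ) : ℂ) * (starRingEnd ℂ) h‖ := by
            rw [hEdef]; exact norm_sub_le _ _
        _ ≤ (‖((r ^ (p - 1) : ℝ) : ℂ) * ((w : ℂ) + h) - ((w ^ p : ℝ) : ℂ)‖
            + ‖(((p + 1) / 2 : ℝ) : ℂ) * ((w ^ (p - 1) : ℝ) : ℂ) * h‖)
            + ‖(((p - 1) / 2 : ℝ) : ℂ) * ((w ^ (p - 1) : ℝ) : ℂ) * (starRingEnd ℂ) h‖ := by
            gcongr; exact norm_sub_le _ _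
        _ ≤ ((‖((r ^ (p - 1) : ℝ) : ℂ) * ((w : ℂ) + h)‖ + ‖((w ^ p : ℝ) : ℂ)‖)
            + ‖(((p + 1) / 2 : ℝ) : ℂ) * ((w ^ (p - 1) : ℝ) : ℂ) * h‖)
            + ‖(((p - 1) / 2 : ℝ) : ℂ) * ((w ^ (p - 1) : ℝ) : ℂ) * (starRingEnd ℂ) h‖ := by
            gcongr; exact norm_sub_le _ _
        _ ≤ ((9 * ‖h‖ ^ p + 4 * ‖h‖ ^ p) + 3 * ‖h‖ ^ p) + ‖h‖ ^ p := by
            gcongr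
        _ ≤ 17 * ‖h‖ ^ p := by linarith
    · -- near regime : 2‖h‖ ≤ w
      have hwpos : (0:ℝ) < w := by linarith
      set a : ℝ := h.re with hadef
      set b : ℝ := h.im with hbdef
      set s : ℝ := w + a with hsdef
      clear_value s a b
      have hs_ge : ‖h‖ ≤ s := by
        have : -‖h‖ ≤ a := neg_le_of_abs_le ha
        rw [hsdef]; linarith
      have hs : (0:ℝ) < s := lt_of_lt_of_le hhp hs_ge
      have hr2 : r ^ 2 = s ^ 2 + b ^ 2 := by
        rw [hrdef, Complex.sq_norm, Complex.normSq_apply]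
        simp [hsdef, hadef, hbdef]
        ring
      have hsr : s ≤ r := by
        have h1 : |((w:ℂ) + h).re| ≤ ‖(w:ℂ) + h‖ := Complex.abs_re_le_norm _
        have h2 : ((w:ℂ) + h).re = s := by simp [hsdef, hadef]
        rw [h2, ← hrdef] at h1
        exact (le_abs_self s).trans h1
      have hrs : r - s ≤ b ^ 2 / (2 * s) := by
        rw [le_div_iff₀ (by positivity)]
        have e : (r - s) * (r + s) = b ^ 2 := by linear_combination hr2
        have e2 : (r - s) * (2 * s) ≤ (r - s) * (r + s) :=
          mul_le_mul_of_nonneg_left (by linarith) (by linarith)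
        linarith
      -- imaginary part
      have him_bound : |E.im| ≤ ‖h‖ ^ p := by
        rw [him]
        have h1 : |r ^ (p - 1) - w ^ (p - 1)| ≤ ‖h‖ ^ (p - 1) := by
          calc |r ^ (p - 1) - w ^ (p - 1)| ≤ |r - w| ^ (p - 1) :=
              aux_holder (by linarith) (by linarith) hr0 hw
            _ ≤ ‖h‖ ^ (p - 1) := Real.rpow_le_rpow (abs_nonneg _) hrw (by linarith)
        calc |r ^ (p - 1) * b - w ^ (p - 1) * b| = |r ^ (p - 1) - w ^ (p - 1)| * |b| := by
              rw [← abs_mul]; ring_nf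
          _ ≤ ‖h‖ ^ (p - 1) * ‖h‖ := by
              apply mul_le_mul h1 hb (abs_nonneg _) (Real.rpow_nonneg hhp.le _)
          _ = ‖h‖ ^ p := hnp
      -- real part
      have hss : s * s ^ (p - 1) = s ^ p := by
        have h' := Real.rpow_add' hs.le (y := p - 1) (z := 1) (by intro hc; linarith)
        rw [show p - 1 + 1 = p by ring] at h'
        rw [h', Real.rpow_one]; ring
      have hA : s * (r ^ (p - 1) - s ^ (p - 1)) ≤ ‖h‖ ^ p := by
        have hconc := aux_tangent_concave hs hsr (by linarith : (0:ℝ) ≤ p - 1)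
          (by linarith : p - 1 ≤ 1)
        rw [show p - 1 - 1 = p - 2 by ring] at hconc
        have hsp2 : s ^ (p - 2) ≤ ‖h‖ ^ (p - 2) :=
          Real.rpow_le_rpow_of_nonpos hhp hs_ge (by linarith)
        have hsp2_pos : (0:ℝ) < s ^ (p - 2) := Real.rpow_pos_of_pos hs _
        have hb2 : b ^ 2 ≤ ‖h‖ * ‖h‖ := by
          calc b ^ 2 = |b| * |b| := by rw [← sq_abs]; ring
            _ ≤ ‖h‖ * ‖h‖ := mul_le_mul hb hb (abs_nonneg _) (norm_nonneg _)
        have hrs0 : 0 ≤ r - s := by linarith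
        have step1 : s * (r ^ (p - 1) - s ^ (p - 1)) ≤ s * ((p - 1) * s ^ (p - 2) * (r - s)) := by
          apply mul_le_mul_of_nonneg_left hconc hs.le
        have step2 : s * ((p - 1) * s ^ (p - 2) * (r - s))
            ≤ s * ((p - 1) * s ^ (p - 2) * (b ^ 2 / (2 * s))) := by
          apply mul_le_mul_of_nonneg_left _ hs.le
          apply mul_le_mul_of_nonneg_left hrs (mul_nonneg (by linarith) hsp2_pos.le)
        have step3 : s * ((p - 1) * s ^ (p - 2) * (b ^ 2 / (2 * s)))
            = (p - 1) / 2 * (s ^ (p - 2) * b ^ 2) := by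
          field_simp
        have hhm2 : ‖h‖ ^ (p - 2) * (‖h‖ * ‖h‖) = ‖h‖ ^ p := by
          have h' := Real.rpow_add hhp (p - 2) 2
          rw [show p - 2 + 2 = p by ring] at h'
          have e2 : ‖h‖ ^ (2:ℝ) = ‖h‖ * ‖h‖ := by
            rw [show (2:ℝ) = ((2:ℕ):ℝ) by norm_num, Real.rpow_natCast]; ring
          rw [h', e2]
        have step4 : s ^ (p - 2) * b ^ 2 ≤ ‖h‖ ^ p := by
          calc s ^ (p - 2) * b ^ 2 ≤ ‖h‖ ^ (p - 2) * (‖h‖ * ‖h‖) := by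
                apply mul_le_mul hsp2 hb2 (by positivity) (by positivity)
            _ = ‖h‖ ^ p := hhm2
        calc s * (r ^ (p - 1) - s ^ (p - 1)) ≤ (p - 1) / 2 * (s ^ (p - 2) * b ^ 2) := by
              rw [← step3]; exact step1.trans step2
          _ ≤ (p - 1) / 2 * ‖h‖ ^ p := by
              apply mul_le_mul_of_nonneg_left step4 (by linarith)
          _ ≤ 1 * ‖h‖ ^ p := mul_le_mul_of_nonneg_right (by linarith) hhp_pos.le
          _ = ‖h‖ ^ p := one_mul _
      have hA0 : 0 ≤ s * (r ^ (p - 1) - s ^ (p - 1)) := by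
        apply mul_nonneg hs.le
        have := Real.rpow_le_rpow hs.le hsr (by linarith : (0:ℝ) ≤ p - 1)
        linarith
      have hB : |s ^ p - w ^ p - p * w ^ (p - 1) * a| ≤ 2 * ‖h‖ ^ p := by
        have hT := aux_taylor hwpos hs hp1.le hp2
        rw [show s - w = a by rw [hsdef]; ring] at hT
        have hap : |a| ^ p ≤ ‖h‖ ^ p := Real.rpow_le_rpow (abs_nonneg _) ha hp0.le
        calc |s ^ p - w ^ p - p * w ^ (p - 1) * a| ≤ p * |a| ^ p := hT
          _ ≤ 2 * |a| ^ p :=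
              mul_le_mul_of_nonneg_right (by linarith) (Real.rpow_nonneg (abs_nonneg a) p)
          _ ≤ 2 * ‖h‖ ^ p := by linarith
      have hre_bound : |E.re| ≤ 3 * ‖h‖ ^ p := by
        have hsplit : E.re = s * (r ^ (p - 1) - s ^ (p - 1))
            + (s ^ p - w ^ p - p * w ^ (p - 1) * a) := by
          rw [hre, ← hss, hsdef]; ring
        rw [hsplit]
        calc |s * (r ^ (p - 1) - s ^ (p - 1)) + (s ^ p - w ^ p - p * w ^ (p - 1) * a)|
            ≤ |s * (r ^ (p - 1) - s ^ (p - 1))| + |s ^ p - w ^ p - p * w ^ (p - 1) * a| :=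
              abs_add_le _ _
          _ ≤ ‖h‖ ^ p + 2 * ‖h‖ ^ p := by
              rw [abs_of_nonneg hA0]
              exact add_le_add hA hB
          _ = 3 * ‖h‖ ^ p := by ring
      calc ‖E‖ ≤ |E.re| + |E.im| := habs
        _ ≤ 3 * ‖h‖ ^ p + ‖h‖ ^ p := add_le_add hre_bound him_bound
        _ ≤ 17 * ‖h‖ ^ p := by linarith
end
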